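/- arXiv:2105.14339 — 4 statements merged into one kernel-verified Lean document; each statement's English description precedes it below -/
import Mathlib

section
/- Let L be a finite simple graph whose vertex set is the disjoint union of nonempty sets A and B, such that there is exactly one edge of L joining a vertex of A to a vertex of B, the induced subgraph L[A] is well-f-covered, and the induced subgraph L[B] is well-f-covered. Then L is well-f-covered and f(L) = f(L[A]) + f(L[B]). -/
/-- `X` induces a forest in `G`: the subgraph induced by `X` is acyclic. -/
def IsInducedForest {V : Type*} (G : SimpleGraph V) (X : Finset V) : Prop :=
  (G.induce (X : Set V)).IsAcyclic

/-- `X` is a maximal induced forest of `G`. -/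
def IsMaximalInducedForest {V : Type*} (G : SimpleGraph V) (X : Finset V) : Prop :=
  IsInducedForest G X ∧ ∀ Y : Finset V, X ⊂ Y → ¬ IsInducedForest G Y

/-- The forest number of `G`: maximum cardinality of an induced forest. -/
noncomputable def forestNum {V : Type*} (G : SimpleGraph V) : ℕ :=
  sSup {n | ∃ X : Finset V, IsInducedForest G X ∧ X.card = n}

/-- `G` is well-f-covered: all maximal induced forests have the same cardinality. -/
def WellFCovered {V : Type*} (G : SimpleGraph V) : Prop :=
  ∀ X Y : Finset V, IsMaximalInducedForest G X → IsMaximalInducedForest G Y →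
    X.card = Y.card

def IsIndepFinset {V : Type*} (G : SimpleGraph V) (X : Finset V) : Prop :=
  ∀ ⦃u⦄, u ∈ X → ∀ ⦃v⦄, v ∈ X → ¬ G.Adj u v

def IsMaximalIndepSet {V : Type*} (G : SimpleGraph V) (X : Finset V) : Prop :=
  IsIndepFinset G X ∧ ∀ Y : Finset V, X ⊂ Y → ¬ IsIndepFinset G Y

noncomputable def indepNum {V : Type*} (G : SimpleGraph V) : ℕ :=
  sSup {n | ∃ X : Finset V, IsIndepFinset G X ∧ X.card = n}

def WellCovered {V : Type*} (G : SimpleGraph V) : Prop :=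
  ∀ X Y : Finset V, IsMaximalIndepSet G X → IsMaximalIndepSet G Y → X.card = Y.card

/-- The join of two graphs on disjoint vertex sets. -/
def joinGraph {V W : Type*} (G : SimpleGraph V) (H : SimpleGraph W) :
    SimpleGraph (V ⊕ W) where
  Adj a b :=
    match a, b with
    | Sum.inl u, Sum.inl v => G.Adj u v
    | Sum.inr u, Sum.inr v => H.Adj u v
    | Sum.inl _, Sum.inr _ => True
    | Sum.inr _, Sum.inl _ => True
  symm := ⟨by rintro (u|u) (v|v) h <;> first | exact h.symm | trivial⟩
  loopless := ⟨by rintro (u|u) h <;> exact SimpleGraph.irrefl _ h⟩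

set_option linter.unusedSectionVars false

namespace Stmt6Aux
open SimpleGraph Walk

variable {V : Type*} {L : SimpleGraph V}

lemma acyclic_of_embedding {W : Type*} {G : SimpleGraph V} {H : SimpleGraph W}
    (f : G ↪g H) (h : H.IsAcyclic) : G.IsAcyclic := fun _v c hc =>
  h (c.map f.toHom) (hc.map f.injective)

def liftWalk {s : Set V} : ∀ {u v : V} (w : L.Walk u v) (hs : ∀ x ∈ w.support, x ∈ s),
    (L.induce s).Walk ⟨u, hs u w.start_mem_support⟩ ⟨v, hs v w.end_mem_support⟩
  | _, _, .nil, _ => .nil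
  | _, _, .cons h w, hs =>
      .cons (by exact h) (liftWalk w fun x hx => hs x (by simp [hx]))

lemma liftWalk_map {s : Set V} : ∀ {u v : V} (w : L.Walk u v) (hs : ∀ x ∈ w.support, x ∈ s),
    (liftWalk w hs).map (SimpleGraph.Embedding.induce s).toHom = w
  | _, _, .nil, _ => rfl
  | _, _, .cons h w, hs => by
      simp only [liftWalk, Walk.map_cons, liftWalk_map w]
      exact congrArg (Walk.cons h) (liftWalk_map w _)

lemma induce_isAcyclic_iff {s : Set V} :
    (L.induce s).IsAcyclic ↔
      ∀ (u : V) (c : L.Walk u u), (∀ x ∈ c.support, x ∈ s) → ¬ c.IsCycle := by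
  constructor
  · intro h u c hs hc
    have hm : ((liftWalk c hs).map (SimpleGraph.Embedding.induce s).toHom).IsCycle := by
      rw [liftWalk_map]; exact hc
    have hlift : (liftWalk c hs).IsCycle :=
      (Walk.map_isCycle_iff_of_injective (SimpleGraph.Embedding.induce (G := L) s).injective).mp hm
    exact h _ hlift
  · intro h u c hc
    have hmap : (c.map (SimpleGraph.Embedding.induce s).toHom).IsCycle :=
      hc.map (SimpleGraph.Embedding.induce (G := L) s).injective
    refine h _ _ ?_ hmap
    intro x hx
    rw [Walk.support_map, List.mem_map] at hx
    obtain ⟨y, -, rfl⟩ := hx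
    exact y.2

section Fin
variable [Fintype V] [DecidableEq V]

lemma bridge_mem_edges {A B : Finset V} (hdisj : Disjoint A B)
    (hcover : A ∪ B = Finset.univ) {a b : V}
    (huniq : ∀ x y : V, x ∈ A → y ∈ B → L.Adj x y → x = a ∧ y = b) :
    ∀ {u v : V} (w : L.Walk u v), u ∈ A → v ∈ B → s(a, b) ∈ w.edges
  | _, _, .nil, hu, hv => by
      exact absurd hv (Finset.disjoint_left.1 hdisj hu)
  | u, v, .cons (v := u') h w, hu, hv => by
      by_cases hu' : u' ∈ B
      · obtain ⟨rfl, rfl⟩ := huniq u u' hu hu' h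
        simp
      · have hu'A : u' ∈ A := by
          have : u' ∈ A ∪ B := hcover ▸ Finset.mem_univ u'
          rcases Finset.mem_union.1 this with h1 | h1
          · exact h1
          · exact absurd h1 hu'
        have := bridge_mem_edges hdisj hcover huniq w hu'A hv
        simp [this]

lemma forest_subset {X Y : Finset V} (h : Y ⊆ X) (hX : IsInducedForest L X) :
    IsInducedForest L Y :=
  acyclic_of_embedding (L.induceHomOfLE (by exact_mod_cast h)) hX

lemma forest_empty : IsInducedForest L (∅ : Finset V) := fun v _c _hc => by
  have := v.2; simp at this

lemma glue {A B : Finset V} (hdisj : Disjoint A B) (hcover : A ∪ B = Finset.univ)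
    {a b : V} (huniq : ∀ x y : V, x ∈ A → y ∈ B → L.Adj x y → x = a ∧ y = b)
    {XA XB : Finset V} (hXAsub : XA ⊆ A) (hXBsub : XB ⊆ B)
    (hXA : IsInducedForest L XA) (hXB : IsInducedForest L XB) :
    IsInducedForest L (XA ∪ XB) := by
  rw [IsInducedForest, induce_isAcyclic_iff] at hXA hXB ⊢
  intro u c hs hc
  by_cases hallA : ∀ x ∈ c.support, x ∈ (XA : Set V)
  · exact hXA u c hallA hc
  by_cases hallB : ∀ x ∈ c.support, x ∈ (XB : Set V)
  · exact hXB u c hallB hc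
  push_neg at hallA hallB
  obtain ⟨p, hp, hpA⟩ := hallA
  obtain ⟨q, hq, hqB⟩ := hallB
  have hmem : ∀ x ∈ c.support, x ∈ XA ∨ x ∈ XB := by
    intro x hx; have := hs x hx; simpa using this
  have hpB : p ∈ B := hXBsub ((hmem p hp).resolve_left (by simpa using hpA))
  have hqA : q ∈ A := hXAsub ((hmem q hq).resolve_right (by simpa using hqB))
  have hnodup : c.edges.Nodup := hc.edges_nodup
  have hsplit := congrArg Walk.edges (c.take_spec hp)
  rw [Walk.edges_append] at hsplit
  have hnd2 : ((c.takeUntil p hp).edges ++ (c.dropUntil p hp).edges).Nodup := by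
    rw [hsplit]; exact hnodup
  have hdisjE := (List.nodup_append.1 hnd2).2.2
  rcases Finset.mem_union.1 (hcover ▸ Finset.mem_univ u) with huA | huB
  · have h1 : s(a, b) ∈ (c.takeUntil p hp).edges :=
      bridge_mem_edges hdisj hcover huniq _ huA hpB
    have h2 : s(a, b) ∈ (c.dropUntil p hp).edges := by
      have := bridge_mem_edges hdisj hcover huniq (c.dropUntil p hp).reverse huA hpB
      rwa [Walk.edges_reverse, List.mem_reverse] at this
    exact hdisjE _ h1 _ h2 rfl
  · -- u ∈ B; use q ∈ A instead
    have hsplit' := congrArg Walk.edges (c.take_spec hq)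
    rw [Walk.edges_append] at hsplit'
    have hnd2' : ((c.takeUntil q hq).edges ++ (c.dropUntil q hq).edges).Nodup := by
      rw [hsplit']; exact hnodup
    have hdisjE' := (List.nodup_append.1 hnd2').2.2
    have h1 : s(a, b) ∈ (c.takeUntil q hq).edges := by
      have := bridge_mem_edges hdisj hcover huniq (c.takeUntil q hq).reverse hqA huB
      rwa [Walk.edges_reverse, List.mem_reverse] at this
    have h2 : s(a, b) ∈ (c.dropUntil q hq).edges :=
      bridge_mem_edges hdisj hcover huniq _ hqA huB
    exact hdisjE' _ h1 _ h2 rfl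

end Fin

lemma inducedForest_subtype_iff (s : Set V) (Y : Finset s) :
    IsInducedForest (L.induce s) Y ↔
      IsInducedForest L (Y.map (Function.Embedding.subtype _)) := by
  rw [IsInducedForest, IsInducedForest, induce_isAcyclic_iff, induce_isAcyclic_iff]
  constructor
  · intro h u c hs hc
    have hss : ∀ x ∈ c.support, x ∈ s := by
      intro x hx
      have := hs x hx
      simp only [Finset.coe_map, Set.mem_image, Finset.mem_coe,
        Function.Embedding.coe_subtype] at this
      obtain ⟨y, _, rfl⟩ := this
      exact y.2
    have hcyc : (liftWalk c hss).IsCycle := by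
      have hm : ((liftWalk c hss).map (SimpleGraph.Embedding.induce s).toHom).IsCycle := by
        rw [liftWalk_map]; exact hc
      exact (Walk.map_isCycle_iff_of_injective
        (SimpleGraph.Embedding.induce (G := L) s).injective).mp hm
    refine h _ (liftWalk c hss) ?_ hcyc
    intro x hx
    have hval : (x : V) ∈ c.support := by
      have hsupp : ((liftWalk c hss).map
          (SimpleGraph.Embedding.induce s).toHom).support = c.support := by
        rw [liftWalk_map]
        rfl
      rw [Walk.support_map] at hsupp
      rw [← hsupp]
      exact List.mem_map_of_mem hx
    have := hs _ hval
    simp only [Finset.coe_map, Set.mem_image, Finset.mem_coe,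
      Function.Embedding.coe_subtype] at this
    obtain ⟨y, hy, hyx⟩ := this
    have : y = x := Subtype.ext hyx
    subst this
    exact hy
  · intro h u c hs hc
    have hmap : (c.map (SimpleGraph.Embedding.induce s).toHom).IsCycle :=
      hc.map (SimpleGraph.Embedding.induce (G := L) s).injective
    refine h _ _ ?_ hmap
    intro x hx
    rw [Walk.support_map, List.mem_map] at hx
    obtain ⟨y, hy, rfl⟩ := hx
    have : y ∈ (Y : Set s) := hs y hy
    simp only [Finset.coe_map, Set.mem_image, Finset.mem_coe,
      Function.Embedding.coe_subtype]
    exact ⟨y, this, rfl⟩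

section Restr
variable [DecidableEq V]

noncomputable def restr (A X : Finset V) : Finset ((A : Set V)) :=
  letI := Classical.decPred (· ∈ (A : Set V))
  X.subtype (· ∈ (A : Set V))

lemma restr_map (A X : Finset V) :
    (restr A X).map (Function.Embedding.subtype _) = X ∩ A := by
  ext v
  simp only [restr, Finset.mem_map, Finset.mem_subtype, Finset.mem_inter,
    Function.Embedding.coe_subtype]
  constructor
  · rintro ⟨⟨w, hw⟩, hwX, rfl⟩
    exact ⟨hwX, by simpa using hw⟩
  · rintro ⟨hvX, hvA⟩
    exact ⟨⟨v, by simpa using hvA⟩, hvX, rfl⟩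

lemma restr_of_map (A : Finset V) (Y : Finset ((A : Set V))) :
    restr A (Y.map (Function.Embedding.subtype _)) = Y := by
  ext ⟨v, hv⟩
  simp only [restr, Finset.mem_subtype, Finset.mem_map, Function.Embedding.coe_subtype]
  constructor
  · rintro ⟨⟨w, hw⟩, hwY, h⟩
    obtain rfl : w = v := h
    exact hwY
  · intro h
    exact ⟨⟨v, hv⟩, h, rfl⟩

lemma map_subset (A : Finset V) (Y : Finset ((A : Set V))) :
    Y.map (Function.Embedding.subtype _) ⊆ A := by
  intro v hv
  simp only [Finset.mem_map, Function.Embedding.coe_subtype] at hv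
  obtain ⟨⟨w, hw⟩, _, rfl⟩ := hv
  simpa using hw

lemma restr_card (A X : Finset V) : (restr A X).card = (X ∩ A).card := by
  rw [← restr_map A X, Finset.card_map]

end Restr

end Stmt6Aux

/-- If the vertex set of `L` is the disjoint union of nonempty sets `A`
and `B` with exactly one edge of `L` joining `A` to `B` (a bridge), and the induced
subgraphs `L[A]` and `L[B]` are well-f-covered, then `L` is well-f-covered and
`f(L) = f(L[A]) + f(L[B])`. -/
theorem stmt6 {V : Type*} [Fintype V] [DecidableEq V] (L : SimpleGraph V)
    (A B : Finset V) (hA : A.Nonempty) (hB : B.Nonempty) (hdisj : Disjoint A B)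
    (hcover : A ∪ B = Finset.univ)
    (hbridge : ∃! p : V × V, p.1 ∈ A ∧ p.2 ∈ B ∧ L.Adj p.1 p.2)
    (hwA : WellFCovered (L.induce (A : Set V)))
    (hwB : WellFCovered (L.induce (B : Set V))) :
    WellFCovered L ∧
      forestNum L = forestNum (L.induce (A : Set V)) + forestNum (L.induce (B : Set V)) := by

  classical
  obtain ⟨⟨a, b⟩, ⟨haA, hbB, hab⟩, huniq'⟩ := hbridge
  have huniq : ∀ x y : V, x ∈ A → y ∈ B → L.Adj x y → x = a ∧ y = b := by
    intro x y hx hy h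
    have := huniq' (x, y) ⟨hx, hy, h⟩
    exact ⟨congrArg Prod.fst this, congrArg Prod.snd this⟩
  have hsplitX : ∀ X : Finset V, (X ∩ A) ∪ (X ∩ B) = X := by
    intro X
    rw [← Finset.inter_union_distrib_left, hcover, Finset.inter_univ]
  have hiff : ∀ X : Finset V,
      IsInducedForest L X ↔ IsInducedForest L (X ∩ A) ∧ IsInducedForest L (X ∩ B) := by
    intro X
    constructor
    · intro h
      exact ⟨Stmt6Aux.forest_subset Finset.inter_subset_left h,
        Stmt6Aux.forest_subset Finset.inter_subset_left h⟩
    · rintro ⟨h1, h2⟩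
      have := Stmt6Aux.glue hdisj hcover huniq Finset.inter_subset_right
        Finset.inter_subset_right h1 h2
      rwa [hsplitX X] at this
  have hforestA : ∀ X : Finset V,
      IsInducedForest (L.induce (A : Set V)) (Stmt6Aux.restr A X) ↔
        IsInducedForest L (X ∩ A) := by
    intro X
    rw [Stmt6Aux.inducedForest_subtype_iff, Stmt6Aux.restr_map]
  have hforestB : ∀ X : Finset V,
      IsInducedForest (L.induce (B : Set V)) (Stmt6Aux.restr B X) ↔
        IsInducedForest L (X ∩ B) := by
    intro X
    rw [Stmt6Aux.inducedForest_subtype_iff, Stmt6Aux.restr_map]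
  have hcardX : ∀ X : Finset V, X.card = (X ∩ A).card + (X ∩ B).card := by
    intro X
    rw [← Finset.card_union_of_disjoint
      (hdisj.mono Finset.inter_subset_right Finset.inter_subset_right), hsplitX X]
  have hmaxA : ∀ X : Finset V, IsMaximalInducedForest L X →
      IsMaximalInducedForest (L.induce (A : Set V)) (Stmt6Aux.restr A X) := by
    rintro X ⟨hXf, hXmax⟩
    refine ⟨(hforestA X).2 ((hiff X).1 hXf).1, ?_⟩
    intro Z hZss hZf
    set ZV := Z.map (Function.Embedding.subtype _) with hZV
    have hZVA : ZV ⊆ A := Stmt6Aux.map_subset A Z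
    have hZVf : IsInducedForest L ZV := (Stmt6Aux.inducedForest_subtype_iff _ _).1 hZf
    have hYf : IsInducedForest L (ZV ∪ (X ∩ B)) :=
      Stmt6Aux.glue hdisj hcover huniq hZVA Finset.inter_subset_right hZVf ((hiff X).1 hXf).2
    have hsub : X ⊆ ZV ∪ (X ∩ B) := by
      intro v hv
      rcases Finset.mem_union.1 (hcover ▸ Finset.mem_univ v) with hvA | hvB
      · have hvm : v ∈ X ∩ A := Finset.mem_inter.2 ⟨hv, hvA⟩
        rw [← Stmt6Aux.restr_map A X] at hvm
        exact Finset.mem_union_left _ (Finset.map_subset_map.2 hZss.subset hvm)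
      · exact Finset.mem_union_right _ (Finset.mem_inter.2 ⟨hv, hvB⟩)
    have hcardlt : X.card < (ZV ∪ (X ∩ B)).card := by
      have h1 : (ZV ∪ (X ∩ B)).card = ZV.card + (X ∩ B).card :=
        Finset.card_union_of_disjoint (hdisj.mono hZVA Finset.inter_subset_right)
      have h2 : (X ∩ A).card < ZV.card := by
        rw [hZV, Finset.card_map, ← Stmt6Aux.restr_card A X]
        exact Finset.card_lt_card hZss
      rw [h1, hcardX X]
      omega
    refine hXmax _ ?_ hYf
    rw [Finset.ssubset_def]
    exact ⟨hsub, fun hback => by have := Finset.card_le_card hback; omega⟩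
  have hmaxB : ∀ X : Finset V, IsMaximalInducedForest L X →
      IsMaximalInducedForest (L.induce (B : Set V)) (Stmt6Aux.restr B X) := by
    rintro X ⟨hXf, hXmax⟩
    refine ⟨(hforestB X).2 ((hiff X).1 hXf).2, ?_⟩
    intro Z hZss hZf
    set ZV := Z.map (Function.Embedding.subtype _) with hZV
    have hZVB : ZV ⊆ B := Stmt6Aux.map_subset B Z
    have hZVf : IsInducedForest L ZV := (Stmt6Aux.inducedForest_subtype_iff _ _).1 hZf
    have hYf : IsInducedForest L ((X ∩ A) ∪ ZV) :=
      Stmt6Aux.glue hdisj hcover huniq Finset.inter_subset_right hZVB ((hiff X).1 hXf).1 hZVf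
    have hsub : X ⊆ (X ∩ A) ∪ ZV := by
      intro v hv
      rcases Finset.mem_union.1 (hcover ▸ Finset.mem_univ v) with hvA | hvB
      · exact Finset.mem_union_left _ (Finset.mem_inter.2 ⟨hv, hvA⟩)
      · have hvm : v ∈ X ∩ B := Finset.mem_inter.2 ⟨hv, hvB⟩
        rw [← Stmt6Aux.restr_map B X] at hvm
        exact Finset.mem_union_right _ (Finset.map_subset_map.2 hZss.subset hvm)
    have hcardlt : X.card < ((X ∩ A) ∪ ZV).card := by
      have h1 : ((X ∩ A) ∪ ZV).card = (X ∩ A).card + ZV.card :=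
        Finset.card_union_of_disjoint (hdisj.mono Finset.inter_subset_right hZVB)
      have h2 : (X ∩ B).card < ZV.card := by
        rw [hZV, Finset.card_map, ← Stmt6Aux.restr_card B X]
        exact Finset.card_lt_card hZss
      rw [h1, hcardX X]
      omega
    refine hXmax _ ?_ hYf
    rw [Finset.ssubset_def]
    exact ⟨hsub, fun hback => by have := Finset.card_le_card hback; omega⟩
  have hwf : WellFCovered L := by
    intro X Y hX hY
    have e1 := hwA _ _ (hmaxA X hX) (hmaxA Y hY)
    have e2 := hwB _ _ (hmaxB X hX) (hmaxB Y hY)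
    rw [Stmt6Aux.restr_card, Stmt6Aux.restr_card] at e1 e2
    rw [hcardX X, hcardX Y, e1, e2]
  refine ⟨hwf, ?_⟩
  -- forest number computation
  have hbddL : BddAbove {n | ∃ X : Finset V, IsInducedForest L X ∧ X.card = n} :=
    ⟨Fintype.card V, by rintro n ⟨X, -, rfl⟩; exact Finset.card_le_univ X⟩
  have hneL : {n | ∃ X : Finset V, IsInducedForest L X ∧ X.card = n}.Nonempty :=
    ⟨0, ∅, Stmt6Aux.forest_empty, Finset.card_empty⟩
  have hbddA : BddAbove {n | ∃ X : Finset ((A : Set V)),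
      IsInducedForest (L.induce (A : Set V)) X ∧ X.card = n} :=
    ⟨Fintype.card ((A : Set V)), by rintro n ⟨X, -, rfl⟩; exact Finset.card_le_univ X⟩
  have hneA : {n | ∃ X : Finset ((A : Set V)),
      IsInducedForest (L.induce (A : Set V)) X ∧ X.card = n}.Nonempty :=
    ⟨0, ∅, Stmt6Aux.forest_empty, Finset.card_empty⟩
  have hbddB : BddAbove {n | ∃ X : Finset ((B : Set V)),
      IsInducedForest (L.induce (B : Set V)) X ∧ X.card = n} :=
    ⟨Fintype.card ((B : Set V)), by rintro n ⟨X, -, rfl⟩; exact Finset.card_le_univ X⟩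
  have hneB : {n | ∃ X : Finset ((B : Set V)),
      IsInducedForest (L.induce (B : Set V)) X ∧ X.card = n}.Nonempty :=
    ⟨0, ∅, Stmt6Aux.forest_empty, Finset.card_empty⟩
  obtain ⟨F, hFf, hFc⟩ : ∃ X : Finset V, IsInducedForest L X ∧ X.card = forestNum L :=
    Nat.sSup_mem hneL hbddL
  obtain ⟨FA, hFAf, hFAc⟩ : ∃ X : Finset ((A : Set V)),
      IsInducedForest (L.induce (A : Set V)) X ∧ X.card = forestNum (L.induce (A : Set V)) :=
    Nat.sSup_mem hneA hbddA
  obtain ⟨FB, hFBf, hFBc⟩ : ∃ X : Finset ((B : Set V)),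
      IsInducedForest (L.induce (B : Set V)) X ∧ X.card = forestNum (L.induce (B : Set V)) :=
    Nat.sSup_mem hneB hbddB
  -- upper bound
  have hle1 : (F ∩ A).card ≤ forestNum (L.induce (A : Set V)) :=
    le_csSup hbddA ⟨Stmt6Aux.restr A F, (hforestA F).2 ((hiff F).1 hFf).1,
      Stmt6Aux.restr_card A F⟩
  have hle2 : (F ∩ B).card ≤ forestNum (L.induce (B : Set V)) :=
    le_csSup hbddB ⟨Stmt6Aux.restr B F, (hforestB F).2 ((hiff F).1 hFf).2,
      Stmt6Aux.restr_card B F⟩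
  -- lower bound
  have hMAf : IsInducedForest L (FA.map (Function.Embedding.subtype _)) :=
    (Stmt6Aux.inducedForest_subtype_iff _ _).1 hFAf
  have hMBf : IsInducedForest L (FB.map (Function.Embedding.subtype _)) :=
    (Stmt6Aux.inducedForest_subtype_iff _ _).1 hFBf
  have hUf : IsInducedForest L
      (FA.map (Function.Embedding.subtype _) ∪ FB.map (Function.Embedding.subtype _)) :=
    Stmt6Aux.glue hdisj hcover huniq (Stmt6Aux.map_subset A FA) (Stmt6Aux.map_subset B FB)
      hMAf hMBf
  have hge : forestNum (L.induce (A : Set V)) + forestNum (L.induce (B : Set V)) ≤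
      forestNum L := by
    apply le_csSup hbddL
    refine ⟨_, hUf, ?_⟩
    rw [Finset.card_union_of_disjoint
      (hdisj.mono (Stmt6Aux.map_subset A FA) (Stmt6Aux.map_subset B FB)),
      Finset.card_map, Finset.card_map, hFAc, hFBc]
  have hcf := hcardX F
  omega
end

section
/- Let L be a finite simple graph, and let A and B be subsets of its vertex set with A ∪ B equal to the whole vertex set and A ∩ B = {v} a single vertex, such that no edge of L joins a vertex of A \ {v} to a vertex of B \ {v}. Suppose the induced subgraphs L[A] and L[B] are both well-f-covered and every maximal induced forest of L[A] contains v. Then L is well-f-covered and f(L) = f(L[A]) + f(L[B]) - 1. -/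
open SimpleGraph

def HasCycleIn {V : Type*} (G : SimpleGraph V) (S : Set V) : Prop :=
  ∃ (u : V) (c : G.Walk u u), c.IsCycle ∧ ∀ x ∈ c.support, x ∈ S

def liftWalk {V : Type*} {G : SimpleGraph V} {S : Set V} :
    ∀ {a b : V} (p : G.Walk a b) (h : ∀ x ∈ p.support, x ∈ S),
      (G.induce S).Walk ⟨a, h a p.start_mem_support⟩ ⟨b, h b p.end_mem_support⟩
  | _, _, Walk.nil, _ => Walk.nil
  | _, _, Walk.cons ha q, h =>
      Walk.cons (by exact ha) (liftWalk q (fun x hx => h x (by simp [hx])))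

theorem liftWalk_map {V : Type*} {G : SimpleGraph V} {S : Set V} :
    ∀ {a b : V} (p : G.Walk a b) (h : ∀ x ∈ p.support, x ∈ S),
      (liftWalk p h).map (Embedding.induce S).toHom = p
  | _, _, Walk.nil, _ => rfl
  | _, _, Walk.cons ha q, h => by
      simp only [liftWalk]
      refine (Walk.map_cons _ _ _).trans ?_
      congr 1
      exact liftWalk_map q _

theorem induce_inj {V : Type*} {S : Set V} (G : SimpleGraph V) :
    Function.Injective ((Embedding.induce S (G := G)).toHom : S → V) :=
  fun a b h => Subtype.ext h

theorem not_induce_acyclic_iff {V : Type*} (G : SimpleGraph V) (S : Set V) :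
    ¬ (G.induce S).IsAcyclic ↔ HasCycleIn G S := by
  constructor
  · intro h
    simp only [IsAcyclic, not_forall, not_not] at h
    obtain ⟨u, c, hc⟩ := h
    refine ⟨u, c.map (Embedding.induce S).toHom, hc.map (induce_inj G), ?_⟩
    intro x hx
    have hx' : x ∈ c.support.map (Embedding.induce (G := G) S).toHom := by
      have := Walk.support_map (Embedding.induce (G := G) S).toHom c
      exact this ▸ hx
    rw [List.mem_map] at hx'
    obtain ⟨y, -, rfl⟩ := hx'
    exact y.2
  · rintro ⟨u, c, hc, hs⟩ hac
    have hcyc : (liftWalk c hs).IsCycle := by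
      rw [← Walk.map_isCycle_iff_of_injective (induce_inj G), liftWalk_map]
      exact hc
    exact hac _ hcyc

theorem isInducedForest_iff {V : Type*} (G : SimpleGraph V) (X : Finset V) :
    IsInducedForest G X ↔ ¬ HasCycleIn G (X : Set V) := by
  rw [IsInducedForest, ← not_induce_acyclic_iff, not_not]

theorem hasCycleIn_mono {V : Type*} {G : SimpleGraph V} {S T : Set V} (h : S ⊆ T) :
    HasCycleIn G S → HasCycleIn G T := by
  rintro ⟨u, c, hc, hs⟩
  exact ⟨u, c, hc, fun x hx => h (hs x hx)⟩

theorem forest_mono {V : Type*} {G : SimpleGraph V} {X Y : Finset V} (h : X ⊆ Y) :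
    IsInducedForest G Y → IsInducedForest G X := by
  rw [isInducedForest_iff, isInducedForest_iff]
  exact fun hY hX => hY (hasCycleIn_mono (by exact_mod_cast h) hX)

theorem forest_empty {V : Type*} (G : SimpleGraph V) : IsInducedForest G (∅ : Finset V) := by
  rw [isInducedForest_iff]
  rintro ⟨u, c, hc, hs⟩
  simpa using hs u c.start_mem_support

theorem hasCycleIn_induce {V : Type*} [DecidableEq V] (G : SimpleGraph V) (S : Set V) (Y : Finset S) :
    HasCycleIn (G.induce S) (Y : Set S) ↔ HasCycleIn G ((Y.image Subtype.val : Finset V) : Set V) := by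
  constructor
  · rintro ⟨u, c, hc, hs⟩
    refine ⟨u, c.map (Embedding.induce S).toHom, hc.map (induce_inj G), ?_⟩
    intro x hx
    have hx' : x ∈ c.support.map (Embedding.induce (G := G) S).toHom := by
      have := Walk.support_map (Embedding.induce (G := G) S).toHom c
      exact this ▸ hx
    rw [List.mem_map] at hx'
    obtain ⟨y, hy, rfl⟩ := hx'
    exact Finset.mem_coe.mpr (Finset.mem_image_of_mem _ (hs y hy))
  · rintro ⟨u, c, hc, hs⟩
    have hS : ∀ x ∈ c.support, x ∈ S := by
      intro x hx
      have := hs x hx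
      rw [Finset.mem_coe, Finset.mem_image] at this
      obtain ⟨y, -, rfl⟩ := this
      exact y.2
    refine ⟨_, liftWalk c hS, ?_, ?_⟩
    · rw [← Walk.map_isCycle_iff_of_injective (induce_inj G), liftWalk_map]; exact hc
    · intro y hy
      have hval : (y : V) ∈ c.support := by
        have := congrArg Walk.support (liftWalk_map c hS)
        rw [Walk.support_map] at this
        have h2 := List.mem_map_of_mem (f := (Embedding.induce (G := G) S).toHom) hy
        rw [this] at h2
        exact h2
      have := hs _ hval
      rw [Finset.mem_coe, Finset.mem_image] at this
      obtain ⟨z, hz, hzz⟩ := this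
      rw [Finset.mem_coe]
      exact (Subtype.ext hzz : z = y) ▸ hz

theorem inducedForest_image {V : Type*} [DecidableEq V] (G : SimpleGraph V) (S : Set V) (Y : Finset S) :
    IsInducedForest (G.induce S) Y ↔ IsInducedForest G (Y.image Subtype.val) := by
  rw [isInducedForest_iff, isInducedForest_iff, hasCycleIn_induce]

theorem maximal_iff_insert {V : Type*} [DecidableEq V] (G : SimpleGraph V) (X : Finset V) :
    IsMaximalInducedForest G X ↔
      IsInducedForest G X ∧ ∀ w ∉ X, ¬ IsInducedForest G (insert w X) := by
  constructor
  · rintro ⟨h1, h2⟩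
    exact ⟨h1, fun w hw => h2 _ (Finset.ssubset_insert hw)⟩
  · rintro ⟨h1, h2⟩
    refine ⟨h1, fun Y hXY hFY => ?_⟩
    obtain ⟨w, hwY, hwX⟩ := Finset.exists_of_ssubset hXY
    exact h2 w hwX (forest_mono (Finset.insert_subset hwY hXY.subset) hFY)

theorem exists_maximal_superset {V : Type*} [Fintype V] [DecidableEq V] (G : SimpleGraph V)
    (X : Finset V) (hX : IsInducedForest G X) :
    ∃ Y, X ⊆ Y ∧ IsMaximalInducedForest G Y := by
  classical
  let s : Finset (Finset V) :=
    Finset.univ.filter (fun Y : Finset V => X ⊆ Y ∧ IsInducedForest G Y)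
  have hne : s.Nonempty := ⟨X, by simp [s, hX]⟩
  obtain ⟨Y, hYs, hmax⟩ := s.exists_max_image Finset.card hne
  simp only [s, Finset.mem_filter, Finset.mem_univ, true_and] at hYs
  refine ⟨Y, hYs.1, hYs.2, fun Z hZ hFZ => ?_⟩
  have hZs : Z ∈ s := by simp [s, hYs.1.trans hZ.subset, hFZ]
  exact absurd (hmax Z hZs) (by simpa using Finset.card_lt_card hZ)

theorem forestNum_spec {V : Type*} [Fintype V] (G : SimpleGraph V) :
    (∃ M : Finset V, IsInducedForest G M ∧ M.card = forestNum G) ∧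
      ∀ X : Finset V, IsInducedForest G X → X.card ≤ forestNum G := by
  classical
  have hbdd : BddAbove {n | ∃ X : Finset V, IsInducedForest G X ∧ X.card = n} := by
    refine ⟨Fintype.card V, ?_⟩
    rintro n ⟨X, -, rfl⟩
    exact X.card_le_univ
  have hne : {n | ∃ X : Finset V, IsInducedForest G X ∧ X.card = n}.Nonempty :=
    ⟨0, ∅, forest_empty G, rfl⟩
  have hmem := Nat.sSup_mem hne hbdd
  obtain ⟨M, hM, hMc⟩ := hmem
  exact ⟨⟨M, hM, hMc⟩, fun X hX => le_csSup hbdd ⟨X, hX, rfl⟩⟩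

theorem wellf_card {V : Type*} [Fintype V] [DecidableEq V] {G : SimpleGraph V}
    (hw : WellFCovered G) {M : Finset V} (hM : IsMaximalInducedForest G M) :
    M.card = forestNum G := by
  obtain ⟨⟨M₀, hM₀, hM₀c⟩, hle⟩ := forestNum_spec G
  have hmax : IsMaximalInducedForest G M₀ := by
    refine ⟨hM₀, fun Z hZ hFZ => ?_⟩
    have := hle Z hFZ
    have := Finset.card_lt_card hZ
    omega
  rw [hw M M₀ hM hmax, hM₀c]

theorem down_surj {V : Type*} [DecidableEq V] (A : Finset V) (X : Finset V) (hX : X ⊆ A) :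
    ∃ Y : Finset ((A : Set V) : Set V), Y.image Subtype.val = X := by
  classical
  refine ⟨X.attach.map ⟨fun p => ⟨p.1, Finset.mem_coe.mpr (hX p.2)⟩,
    fun p q h => Subtype.ext (congrArg Subtype.val h : (p:V) = q)⟩, ?_⟩
  ext x
  simp [Subtype.exists]
  constructor
  · rintro ⟨_, a, b, h⟩
    exact (show a = x from congrArg Subtype.val h) ▸ b
  · intro h; exact ⟨hX h, x, h, rfl⟩

theorem max_bridge {V : Type*} [DecidableEq V] (G : SimpleGraph V) (A : Finset V)
    (Y : Finset ((A : Set V) : Set V)) :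
    IsMaximalInducedForest (G.induce (A : Set V)) Y ↔
      (IsInducedForest G (Y.image Subtype.val) ∧
        ∀ w ∈ A, w ∉ Y.image Subtype.val →
          ¬ IsInducedForest G (insert w (Y.image Subtype.val))) := by
  rw [maximal_iff_insert, inducedForest_image]
  constructor
  · rintro ⟨h1, h2⟩
    refine ⟨h1, fun w hw hwD hF => ?_⟩
    have hz : (⟨w, Finset.mem_coe.mpr hw⟩ : (A : Set V)) ∉ Y := by
      intro hmem
      exact hwD (Finset.mem_image_of_mem _ hmem)
    apply h2 _ hz
    rw [inducedForest_image, Finset.image_insert]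
    exact hF
  · rintro ⟨h1, h2⟩
    refine ⟨h1, fun z hz hF => ?_⟩
    have hwA : (z : V) ∈ A := Finset.mem_coe.mp z.2
    have hwD : (z : V) ∉ Y.image Subtype.val := by
      intro hmem
      rw [Finset.mem_image] at hmem
      obtain ⟨y, hy, hyz⟩ := hmem
      exact hz ((Subtype.ext hyz : y = z) ▸ hy)
    apply h2 _ hwA hwD
    rw [inducedForest_image, Finset.image_insert] at hF
    exact hF

theorem end_mem_tail_support {V : Type*} {G : SimpleGraph V} {x y : V} (p : G.Walk x y)
    (hp : ¬ p.Nil) : y ∈ p.support.tail := by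
  cases p with
  | nil => simp at hp
  | cons h q => simpa using q.end_mem_support

theorem split_forest {V : Type*} [Fintype V] [DecidableEq V] (L : SimpleGraph V)
    (A B : Finset V) (v : V) (hvA : v ∈ A) (hvB : v ∈ B)
    (hcover : A ∪ B = Finset.univ)
    (hnoedge : ∀ a ∈ A, ∀ b ∈ B, a ≠ v → b ≠ v → ¬ L.Adj a b)
    (X : Finset V) :
    IsInducedForest L X ↔ IsInducedForest L (X ∩ A) ∧ IsInducedForest L (X ∩ B) := by
  have hU : ∀ x : V, x ∈ A ∨ x ∈ B := by
    intro x
    have : x ∈ A ∪ B := hcover ▸ Finset.mem_univ x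
    exact Finset.mem_union.mp this
  constructor
  · intro h
    exact ⟨forest_mono Finset.inter_subset_left h, forest_mono Finset.inter_subset_left h⟩
  · rintro ⟨hA, hB⟩
    rw [isInducedForest_iff] at hA hB ⊢
    rintro ⟨u, c, hc, hs⟩
    have hsX : ∀ x ∈ c.support, x ∈ X := fun x hx => Finset.mem_coe.mp (hs x hx)
    -- every edge stays within A or within B
    have edgeA : ∀ x y : V, L.Adj x y → x ∈ A → x ≠ v → y ∈ A := by
      intro x y hadj hx hxv
      by_contra hy
      have hyB : y ∈ B := (hU y).resolve_left hy
      have hyv : y ≠ v := fun h => hy (h ▸ hvA)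
      exact hnoedge x hx y hyB hxv hyv hadj
    have edgeB : ∀ x y : V, L.Adj x y → x ∈ B → x ≠ v → y ∈ B := by
      intro x y hadj hx hxv
      by_contra hy
      have hyA : y ∈ A := (hU y).resolve_right hy
      have hyv : y ≠ v := fun h => hy (h ▸ hvB)
      exact hnoedge y hyA x hx hyv hxv hadj.symm
    have WA : ∀ {x y : V} (p : L.Walk x y), x ∈ A → y ∉ A → v ∈ p.support := by
      intro x y p
      induction p with
      | nil => intro hx hy; exact absurd hx hy
      | @cons x x' y hadj q ih =>
        intro hx hy
        by_cases hxv : x = v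
        · simp [hxv]
        · have hx' : x' ∈ A := edgeA x x' hadj hx hxv
          simpa using Or.inr (ih hx' hy)
    have WB : ∀ {x y : V} (p : L.Walk x y), x ∈ B → y ∉ B → v ∈ p.support := by
      intro x y p
      induction p with
      | nil => intro hx hy; exact absurd hx hy
      | @cons x x' y hadj q ih =>
        intro hx hy
        by_cases hxv : x = v
        · simp [hxv]
        · have hx' : x' ∈ B := edgeB x x' hadj hx hxv
          simpa using Or.inr (ih hx' hy)
    -- claim: the support lies entirely in A or entirely in B
    have hkey : (∀ x ∈ c.support, x ∈ A) ∨ (∀ x ∈ c.support, x ∈ B) := by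
      by_contra hcon
      push_neg at hcon
      obtain ⟨⟨b, hb, hbA⟩, ⟨a, ha, haB⟩⟩ := hcon
      -- b ∉ A so b ∈ B; a ∉ B so a ∈ A
      have hbB : b ∈ B := (hU b).resolve_left hbA
      have haA : a ∈ A := (hU a).resolve_right haB
      have hav : a ≠ v := fun h => haB (h ▸ hvB)
      have hbv : b ≠ v := fun h => hbA (h ▸ hvA)
      have hab : b ≠ a := fun h => hbA (h ▸ haA)
      -- rotate the cycle to start at a
      have hc' := hc.rotate ha
      set c' := c.rotate a ha with hc'def
      have hnotnil : ¬ c.Nil := by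
        intro hnil
        cases c with
        | nil => exact hc.ne_nil rfl
        | cons h q => simp at hnil
      have hbtail : b ∈ c.support.tail := by
        rcases List.mem_cons.mp (c.support_eq_cons ▸ hb) with h | h
        · subst h
          exact end_mem_tail_support c hnotnil
        · exact h
      have hb' : b ∈ c'.support := by
        have hperm := c.support_rotate a ha
        exact List.mem_of_mem_tail (hperm.mem_iff.mpr hbtail)
      -- split c' at b
      have hp : v ∈ (c'.takeUntil b hb').support := WA _ haA hbA
      have hq : v ∈ (c'.dropUntil b hb').support := WB _ hbB haB
      have hspec := c'.take_spec hb'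
      have hnodup : c'.support.tail.Nodup := hc'.2
      have htail : c'.support.tail =
          (c'.takeUntil b hb').support.tail ++ (c'.dropUntil b hb').support.tail := by
        conv_lhs => rw [← hspec]
        rw [Walk.support_append,
          List.tail_append_of_ne_nil (Walk.support_ne_nil _)]
      have hptail : v ∈ (c'.takeUntil b hb').support.tail := by
        rcases List.mem_cons.mp ((c'.takeUntil b hb').support_eq_cons ▸ hp) with h | h
        · exact absurd h.symm hav
        · exact h
      have hqtail : v ∈ (c'.dropUntil b hb').support.tail := by
        rcases List.mem_cons.mp ((c'.dropUntil b hb').support_eq_cons ▸ hq) with h | h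
        · exact absurd h.symm hbv
        · exact h
      rw [htail] at hnodup
      exact (List.nodup_append.mp hnodup).2.2 v hptail v hqtail rfl
    rcases hkey with h | h
    · exact hA ⟨u, c, hc, fun x hx => Finset.mem_coe.mpr
        (Finset.mem_inter.mpr ⟨hsX x hx, h x hx⟩)⟩
    · exact hB ⟨u, c, hc, fun x hx => Finset.mem_coe.mpr
        (Finset.mem_inter.mpr ⟨hsX x hx, h x hx⟩)⟩

/-- If `A ∪ B` is the whole vertex set of `L`, `A ∩ B = {v}`, no edge of
`L` joins `A \ {v}` to `B \ {v}`, the induced subgraphs `L[A]` and `L[B]` are both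
well-f-covered, and every maximal induced forest of `L[A]` contains `v`, then `L` is
well-f-covered and `f(L) = f(L[A]) + f(L[B]) - 1`. -/
theorem stmt7 {V : Type*} [Fintype V] [DecidableEq V] (L : SimpleGraph V)
    (A B : Finset V) (v : V) (hvA : v ∈ A)
    (hcover : A ∪ B = Finset.univ) (hinter : A ∩ B = {v})
    (hnoedge : ∀ a ∈ A, ∀ b ∈ B, a ≠ v → b ≠ v → ¬ L.Adj a b)
    (hwA : WellFCovered (L.induce (A : Set V)))
    (hwB : WellFCovered (L.induce (B : Set V)))
    (hv : ∀ X : Finset (A : Set V),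
      IsMaximalInducedForest (L.induce (A : Set V)) X → (⟨v, hvA⟩ : (A : Set V)) ∈ X) :
    WellFCovered L ∧
      forestNum L =
        forestNum (L.induce (A : Set V)) + forestNum (L.induce (B : Set V)) - 1 := by
  classical
  have hvB : v ∈ B := by
    have hm : v ∈ A ∩ B := by rw [hinter]; exact Finset.mem_singleton_self v
    exact (Finset.mem_inter.mp hm).2
  set fA := forestNum (L.induce (A : Set V)) with hfAdef
  set fB := forestNum (L.induce (B : Set V)) with hfBdef
  have hsplit := split_forest L A B v hvA hvB hcover hnoedge
  have hMAcard : ∀ X : Finset V, X ⊆ A → IsInducedForest L X →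
      (∀ w ∈ A, w ∉ X → ¬ IsInducedForest L (insert w X)) → X.card = fA := by
    intro X hXA hF hins
    obtain ⟨Y, hY⟩ := down_surj A X hXA
    have hmax : IsMaximalInducedForest (L.induce (A : Set V)) Y :=
      (max_bridge L A Y).mpr (by rw [hY]; exact ⟨hF, hins⟩)
    have hc := wellf_card hwA hmax
    rw [← hY, Finset.card_image_of_injective _ Subtype.val_injective]
    exact hc
  have hMBcard : ∀ X : Finset V, X ⊆ B → IsInducedForest L X →
      (∀ w ∈ B, w ∉ X → ¬ IsInducedForest L (insert w X)) → X.card = fB := by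
    intro X hXB hF hins
    obtain ⟨Y, hY⟩ := down_surj B X hXB
    have hmax : IsMaximalInducedForest (L.induce (B : Set V)) Y :=
      (max_bridge L B Y).mpr (by rw [hY]; exact ⟨hF, hins⟩)
    have hc := wellf_card hwB hmax
    rw [← hY, Finset.card_image_of_injective _ Subtype.val_injective]
    exact hc
  have hvin : ∀ X : Finset V, X ⊆ A → IsInducedForest L X →
      (∀ w ∈ A, w ∉ X → ¬ IsInducedForest L (insert w X)) → v ∈ X := by
    intro X hXA hF hins
    obtain ⟨Y, hY⟩ := down_surj A X hXA
    have hmax : IsMaximalInducedForest (L.induce (A : Set V)) Y :=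
      (max_bridge L A Y).mpr (by rw [hY]; exact ⟨hF, hins⟩)
    have hvY := hv Y hmax
    rw [← hY]
    exact Finset.mem_image_of_mem _ hvY
  have key : ∀ X : Finset V, IsMaximalInducedForest L X → X.card = fA + fB - 1 := by
    intro X hX
    rw [maximal_iff_insert] at hX
    obtain ⟨hF, hins⟩ := hX
    have hFA : IsInducedForest L (X ∩ A) := ((hsplit X).mp hF).1
    have hFB : IsInducedForest L (X ∩ B) := ((hsplit X).mp hF).2
    have hXAB : (X ∩ A) ∪ (X ∩ B) = X := by
      rw [← Finset.inter_union_distrib_left, hcover, Finset.inter_univ]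
    have hXABi : (X ∩ A) ∩ (X ∩ B) = X ∩ {v} := by
      rw [← hinter]; ext x; simp only [Finset.mem_inter]; tauto
    have hcard := Finset.card_union_add_card_inter (X ∩ A) (X ∩ B)
    rw [hXAB, hXABi] at hcard
    have hwnB : ∀ w ∈ A, w ≠ v → w ∉ B := by
      intro w hw hwv hwB'
      apply hwv
      have hm : w ∈ A ∩ B := Finset.mem_inter.mpr ⟨hw, hwB'⟩
      rwa [hinter, Finset.mem_singleton] at hm
    have hwnA : ∀ w ∈ B, w ≠ v → w ∉ A := by
      intro w hw hwv hwA'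
      apply hwv
      have hm : w ∈ A ∩ B := Finset.mem_inter.mpr ⟨hwA', hw⟩
      rwa [hinter, Finset.mem_singleton] at hm
    have extA : ∀ w ∈ A, w ≠ v → w ∉ X → ¬ IsInducedForest L (insert w (X ∩ A)) := by
      intro w hw hwv hwX hF'
      apply hins w hwX
      rw [hsplit]
      constructor
      · rw [Finset.insert_inter_of_mem hw]; exact hF'
      · rw [Finset.insert_inter_of_notMem (hwnB w hw hwv)]; exact hFB
    have extB : ∀ w ∈ B, w ≠ v → w ∉ X → ¬ IsInducedForest L (insert w (X ∩ B)) := by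
      intro w hw hwv hwX hF'
      apply hins w hwX
      rw [hsplit]
      constructor
      · rw [Finset.insert_inter_of_notMem (hwnA w hw hwv)]; exact hFA
      · rw [Finset.insert_inter_of_mem hw]; exact hF'
    by_cases hvX : v ∈ X
    · have hXv : X ∩ {v} = {v} := Finset.inter_singleton_of_mem hvX
      have c1 : (X ∩ A).card = fA := by
        apply hMAcard _ Finset.inter_subset_right hFA
        intro w hw hwXA hF'
        have hwX : w ∉ X := fun h => hwXA (Finset.mem_inter.mpr ⟨h, hw⟩)
        by_cases hwv : w = v
        · exact hwX (hwv ▸ hvX)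
        · exact extA w hw hwv hwX hF'
      have c2 : (X ∩ B).card = fB := by
        apply hMBcard _ Finset.inter_subset_right hFB
        intro w hw hwXB hF'
        have hwX : w ∉ X := fun h => hwXB (Finset.mem_inter.mpr ⟨h, hw⟩)
        by_cases hwv : w = v
        · exact hwX (hwv ▸ hvX)
        · exact extB w hw hwv hwX hF'
      rw [hXv, Finset.card_singleton] at hcard
      omega
    · have hXv : X ∩ {v} = ∅ := Finset.inter_singleton_of_notMem hvX
      have hFiv : IsInducedForest L (insert v (X ∩ A)) := by
        by_contra hniv
        have hvXA : v ∈ X ∩ A := by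
          apply hvin _ Finset.inter_subset_right hFA
          intro w hw hwXA hF'
          by_cases hwv : w = v
          · exact hniv (hwv ▸ hF')
          · exact extA w hw hwv (fun h => hwXA (Finset.mem_inter.mpr ⟨h, hw⟩)) hF'
        exact hvX (Finset.mem_inter.mp hvXA).1
      have c1 : (insert v (X ∩ A)).card = fA := by
        apply hMAcard
        · exact Finset.insert_subset hvA Finset.inter_subset_right
        · exact hFiv
        · intro w hw hwmem hF'
          have hwv : w ≠ v := fun h => hwmem (by rw [h]; exact Finset.mem_insert_self v _)
          have hwXA : w ∉ X ∩ A := fun h => hwmem (Finset.mem_insert_of_mem h)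
          have hwX : w ∉ X := fun h => hwXA (Finset.mem_inter.mpr ⟨h, hw⟩)
          apply extA w hw hwv hwX
          exact forest_mono (Finset.insert_subset_insert w (Finset.subset_insert v _)) hF'
      have hvXA' : v ∉ X ∩ A := fun h => hvX (Finset.mem_inter.mp h).1
      have c1' : (X ∩ A).card + 1 = fA := by
        rw [← Finset.card_insert_of_notMem hvXA', c1]
      have hnIB : ¬ IsInducedForest L (insert v (X ∩ B)) := by
        intro hFib
        apply hins v hvX
        rw [hsplit]
        constructor
        · rw [Finset.insert_inter_of_mem hvA]; exact hFiv
        · rw [Finset.insert_inter_of_mem hvB]; exact hFib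
      have c2 : (X ∩ B).card = fB := by
        apply hMBcard _ Finset.inter_subset_right hFB
        intro w hw hwXB hF'
        by_cases hwv : w = v
        · exact hnIB (hwv ▸ hF')
        · exact extB w hw hwv (fun h => hwXB (Finset.mem_inter.mpr ⟨h, hw⟩)) hF'
      rw [hXv, Finset.card_empty] at hcard
      omega
  have hwell : WellFCovered L := fun X Y hX hY => by rw [key X hX, key Y hY]
  refine ⟨hwell, ?_⟩
  obtain ⟨M, -, hM⟩ := exists_maximal_superset L ∅ (forest_empty L)
  rw [← wellf_card hwell hM, key M hM]
end

section
/- Let d ≥ 1 and let L be a finite simple graph whose vertex set is the disjoint union of nonempty sets A, B and a set P = {p_1, ..., p_{d-1}} of d - 1 further vertices, such that: the induced subgraphs L[A] and L[B] are well-f-covered; there exist x ∈ A and y ∈ B such that the edges of L not lying inside A and not lying inside B are exactly the edges of the path x, p_1, p_2, ..., p_{d-1}, y (when d = 1 this is the single edge xy). Then L is well-f-covered and f(L) = f(L[A]) + f(L[B]) + d - 1. -/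
section AuxForStmt8

open SimpleGraph

variable {V W : Type*}

lemma aux_acyclic_of_embedding {G : SimpleGraph V} {H : SimpleGraph W} (f : G ↪g H)
    (h : H.IsAcyclic) : G.IsAcyclic := fun _v c hc =>
  h (c.map f.toHom) (hc.map f.injective)

lemma aux_forest_mono [DecidableEq V] {G : SimpleGraph V} {X Y : Finset V} (h : X ⊆ Y)
    (hY : IsInducedForest G Y) : IsInducedForest G X :=
  aux_acyclic_of_embedding (G.induceHomOfLE (Finset.coe_subset.mpr h)) hY

def auxToInduce {G : SimpleGraph V} {S : Set V} :
    ∀ {u v : V} (p : G.Walk u v) (_hp : ∀ x ∈ p.support, x ∈ S),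
      (G.induce S).Walk ⟨u, by exact _hp u p.start_mem_support⟩
        ⟨v, by exact _hp v p.end_mem_support⟩
  | _, _, SimpleGraph.Walk.nil, _ => SimpleGraph.Walk.nil
  | _, _, SimpleGraph.Walk.cons h p, hp =>
      SimpleGraph.Walk.cons (by exact h)
        (auxToInduce p (fun x hx => hp x (by simp [SimpleGraph.Walk.support_cons, hx])))

lemma auxToInduce_map {G : SimpleGraph V} {S : Set V} :
    ∀ {u v : V} (p : G.Walk u v) (hp : ∀ x ∈ p.support, x ∈ S),
      (auxToInduce p hp).map (SimpleGraph.Embedding.induce S).toHom = p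
  | _, _, SimpleGraph.Walk.nil, _ => rfl
  | _, _, SimpleGraph.Walk.cons h p, hp => by
      simp only [auxToInduce, SimpleGraph.Walk.map_cons]
      exact congrArg (SimpleGraph.Walk.cons _) (auxToInduce_map p _)

lemma aux_no_cycle_of_acyclic_induce {G : SimpleGraph V} {S : Set V}
    (hac : (G.induce S).IsAcyclic) {a : V} (c : G.Walk a a) (hc : c.IsCycle)
    (hs : ∀ x ∈ c.support, x ∈ S) : False := by
  have h1 := auxToInduce_map c hs
  have h2 : (auxToInduce c hs).IsCycle := by
    rw [← SimpleGraph.Walk.map_isCycle_iff_of_injective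
      (f := (SimpleGraph.Embedding.induce S).toHom) (by exact Subtype.val_injective)]
    rw [h1]; exact hc
  exact hac _ h2

end AuxForStmt8

section Aux2

open SimpleGraph

variable {V : Type*}

lemma aux_forest_empty (G : SimpleGraph V) : IsInducedForest G (∅ : Finset V) := by
  intro v c hc
  exact absurd v.2 (by simp)

lemma aux_exists_maximal [Fintype V] (G : SimpleGraph V) (X : Finset V)
    (hX : IsInducedForest G X) : ∃ Y, X ⊆ Y ∧ IsMaximalInducedForest G Y := by
  classical
  set T := Finset.univ.filter (fun Y : Finset V => X ⊆ Y ∧ IsInducedForest G Y) with hT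
  have hne : T.Nonempty := ⟨X, by simp [hT, hX]⟩
  obtain ⟨Y, hYT, hmax⟩ := T.exists_max_image Finset.card hne
  simp only [hT, Finset.mem_filter, Finset.mem_univ, true_and] at hYT hmax
  refine ⟨Y, hYT.1, hYT.2, ?_⟩
  intro Z hZ hZf
  have hle := hmax Z (by simp [hT, hYT.1.trans hZ.subset, hZf])
  exact absurd hle (not_le.mpr (Finset.card_lt_card hZ))

lemma aux_forestNum_spec [Fintype V] (G : SimpleGraph V) :
    (∃ X : Finset V, IsInducedForest G X ∧ X.card = forestNum G) ∧
      ∀ Z : Finset V, IsInducedForest G Z → Z.card ≤ forestNum G := by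
  have hbdd : BddAbove {n | ∃ X : Finset V, IsInducedForest G X ∧ X.card = n} := by
    refine ⟨Fintype.card V, ?_⟩
    rintro n ⟨X, -, rfl⟩
    exact (Finset.card_le_univ X).trans (by simp)
  have hne : {n | ∃ X : Finset V, IsInducedForest G X ∧ X.card = n}.Nonempty :=
    ⟨0, ∅, aux_forest_empty G, Finset.card_empty⟩
  constructor
  · exact Nat.sSup_mem hne hbdd
  · intro Z hZ
    exact le_csSup hbdd ⟨Z, hZ, rfl⟩

lemma aux_wellf_card [Fintype V] {G : SimpleGraph V}
    (hw : WellFCovered G) {X : Finset V} (hX : IsMaximalInducedForest G X) :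
    X.card = forestNum G := by
  obtain ⟨⟨M, hM, hMc⟩, hub⟩ := aux_forestNum_spec G
  have hMmax : IsMaximalInducedForest G M :=
    ⟨hM, fun Z hZ hZf => absurd (hub Z hZf)
      (not_le.mpr (hMc ▸ Finset.card_lt_card hZ))⟩
  rw [hw X M hX hMmax, hMc]

lemma aux_forest_subtype {G : SimpleGraph V} {S : Set V} (Y : Finset ↥S) :
    IsInducedForest (G.induce S) Y ↔
      IsInducedForest G (Y.map (Function.Embedding.subtype _)) := by
  have hval : ∀ b : V, b ∈ (Y.map (Function.Embedding.subtype (· ∈ S)) : Finset V) →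
      b ∈ S := by
    intro b hb
    rw [Finset.mem_map] at hb
    obtain ⟨a, _, rfl⟩ := hb
    exact a.2
  have hmem : ∀ (b : V) (hb : b ∈ (Y.map (Function.Embedding.subtype (· ∈ S)) : Finset V)),
      (⟨b, hval b hb⟩ : ↥S) ∈ Y := by
    intro b hb
    rw [Finset.mem_map] at hb
    obtain ⟨a, ha, rfl⟩ := hb
    exact (by exact_mod_cast ha : (⟨(a : V), _⟩ : ↥S) ∈ Y)
  constructor
  · intro h
    refine aux_acyclic_of_embedding ?_ h
    exact {
      toFun := fun b => ⟨⟨(b : V), hval _ (by exact_mod_cast b.2)⟩,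
        by exact_mod_cast hmem _ (by exact_mod_cast b.2)⟩
      inj' := by
        rintro a b hab
        simp only [Subtype.mk.injEq] at hab
        exact Subtype.ext hab
      map_rel_iff' := Iff.rfl }
  · intro h
    refine aux_acyclic_of_embedding ?_ h
    exact {
      toFun := fun a => ⟨(a : ↥S), by
        have : (a : ↥S) ∈ Y := by exact_mod_cast a.2
        exact_mod_cast Finset.mem_map_of_mem (Function.Embedding.subtype _) this⟩
      inj' := by
        rintro a b hab
        simp only [Subtype.mk.injEq] at hab
        exact Subtype.ext (Subtype.ext hab)
      map_rel_iff' := Iff.rfl }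

end Aux2

/-- Let `d ≥ 1` and let the vertex set of `L` be the disjoint union of
nonempty sets `A`, `B` and the `d - 1` interior vertices of a path
`x = w 0, w 1, ..., w d = y` with `x ∈ A`, `y ∈ B`, where `L[A]` and `L[B]` are
well-f-covered and the edges of `L` not lying inside `A` nor inside `B` are exactly
the edges of the path. Then `L` is well-f-covered and
`f(L) = f(L[A]) + f(L[B]) + d - 1`. -/
theorem stmt8 {V : Type*} [Fintype V] [DecidableEq V] (L : SimpleGraph V)
    (d : ℕ) (hd : 1 ≤ d) (A B : Finset V)
    (hA : A.Nonempty) (hB : B.Nonempty) (hdisj : Disjoint A B)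
    (w : Fin (d + 1) → V) (hw : Function.Injective w)
    (hw0 : w 0 ∈ A) (hwd : w (Fin.last d) ∈ B)
    (hint : ∀ i : Fin (d + 1), 0 < (i : ℕ) → (i : ℕ) < d → w i ∉ A ∧ w i ∉ B)
    (hcover : ∀ v : V, v ∈ A ∨ v ∈ B ∨ ∃ i : Fin (d + 1), v = w i)
    (hwA : WellFCovered (L.induce (A : Set V)))
    (hwB : WellFCovered (L.induce (B : Set V)))
    (hedges : ∀ u v : V, ¬(u ∈ A ∧ v ∈ A) → ¬(u ∈ B ∧ v ∈ B) →
      (L.Adj u v ↔ ∃ i : Fin d,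
        (u = w i.castSucc ∧ v = w i.succ) ∨ (u = w i.succ ∧ v = w i.castSucc))) :
    WellFCovered L ∧
      forestNum L =
        forestNum (L.induce (A : Set V)) + forestNum (L.induce (B : Set V)) + d - 1 := by
  classical
  have hdAB : ∀ v : V, v ∈ A → v ∈ B → False :=
    fun v hva hvb => Finset.disjoint_left.mp hdisj hva hvb
  have hmemA : ∀ j : Fin (d + 1), w j ∈ A ↔ j = 0 := by
    intro j
    constructor
    · intro hj
      by_contra h0
      rcases eq_or_ne j (Fin.last d) with rfl | hl
      · exact hdAB _ hj hwd
      · have h1 : 0 < (j : ℕ) := Nat.pos_of_ne_zero (fun h => h0 (Fin.ext (by simp [h])))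
        have h2 : (j : ℕ) < d := by
          have hle : (j : ℕ) ≤ d := Nat.lt_succ_iff.mp j.isLt
          have : (j : ℕ) ≠ d := fun h => hl (Fin.ext (by simp [h]))
          omega
        exact (hint j h1 h2).1 hj
    · rintro rfl; exact hw0
  have hmemB : ∀ j : Fin (d + 1), w j ∈ B ↔ j = Fin.last d := by
    intro j
    constructor
    · intro hj
      by_contra h0
      rcases eq_or_ne j 0 with rfl | hl
      · exact hdAB _ hw0 hj
      · have h1 : 0 < (j : ℕ) := Nat.pos_of_ne_zero (fun h => hl (Fin.ext (by simp [h])))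
        have h2 : (j : ℕ) < d := by
          have hle : (j : ℕ) ≤ d := Nat.lt_succ_iff.mp j.isLt
          have : (j : ℕ) ≠ d := fun h => h0 (Fin.ext (by simp [h]))
          omega
        exact (hint j h1 h2).2 hj
    · rintro rfl; exact hwd
  -- path edges are edges of L
  have hadjP : ∀ i : Fin d, L.Adj (w i.castSucc) (w i.succ) := by
    intro i
    have hsucc0 : i.succ ≠ (0 : Fin (d + 1)) := by
      intro h
      have := congrArg Fin.val h
      simp at this
    have hcastlast : i.castSucc ≠ Fin.last d := by
      intro h
      have := congrArg Fin.val h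
      simp only [Fin.coe_castSucc, Fin.val_last] at this
      exact absurd this (Nat.ne_of_lt i.isLt)
    refine (hedges _ _ ?_ ?_).mpr ⟨i, Or.inl ⟨rfl, rfl⟩⟩
    · rintro ⟨-, h2⟩; exact (fun h => hsucc0 ((hmemA _).mp h)) h2
    · rintro ⟨h1, -⟩; exact (fun h => hcastlast ((hmemB _).mp h)) h1
  -- each path edge is a bridge of L
  have hbridge : ∀ i : Fin d, L.IsBridge s(w i.castSucc, w i.succ) := by
    intro i
    rw [SimpleGraph.isBridge_iff]
    show ¬ (L \ SimpleGraph.fromEdgeSet {s(w i.castSucc, w i.succ)}).Reachable _ _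
    set P : V → Prop := fun v => v ∈ A ∨ ∃ j : Fin (d + 1), (j : ℕ) ≤ (i : ℕ) ∧ v = w j
      with hP
    have hnotP : ∀ j : Fin (d + 1), (i : ℕ) < (j : ℕ) → ¬ P (w j) := by
      intro j hij hpj
      rcases hpj with hja | ⟨k, hk, hkeq⟩
      · have hj0 := (hmemA j).mp hja
        rw [hj0] at hij
        simp at hij
      · have := hw hkeq
        subst this
        omega
    have hBnotP : ∀ x, x ∈ B → ¬ P x := by
      intro x hx hpx
      rcases hpx with h | ⟨k, hk, rfl⟩
      · exact hdAB x h hx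
      · have hkl := (hmemB k).mp hx
        rw [hkl] at hk
        simp only [Fin.val_last] at hk
        omega
    have hPc : ∀ j : Fin (d + 1), (j : ℕ) ≤ (i : ℕ) → P (w j) :=
      fun j hj => Or.inr ⟨j, hj, rfl⟩
    have hstep : ∀ u v : V,
        (L \ SimpleGraph.fromEdgeSet {s(w i.castSucc, w i.succ)}).Adj u v →
        (P u ↔ P v) := by
      intro u v huv
      rw [SimpleGraph.sdiff_adj] at huv
      obtain ⟨hadj, hne⟩ := huv
      have hnee : s(u, v) ≠ s(w i.castSucc, w i.succ) := by
        intro h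
        exact hne (by rw [SimpleGraph.fromEdgeSet_adj]; exact ⟨by simp [h], hadj.ne⟩)
      by_cases hA2 : u ∈ A ∧ v ∈ A
      · simp [hP, hA2.1, hA2.2]
      by_cases hB2 : u ∈ B ∧ v ∈ B
      · simp [hBnotP u hB2.1, hBnotP v hB2.2]
      obtain ⟨k, hk⟩ := (hedges u v hA2 hB2).mp hadj
      have hki : (k : ℕ) ≠ (i : ℕ) := by
        intro h
        have hkeq : k = i := Fin.ext h
        subst hkeq
        rcases hk with ⟨rfl, rfl⟩ | ⟨rfl, rfl⟩
        · exact hnee rfl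
        · exact hnee (Sym2.eq_swap)
      rcases Nat.lt_or_ge (k : ℕ) (i : ℕ) with hlt | hge
      · have h1 : P (w k.castSucc) := hPc _ (by simp; omega)
        have h2 : P (w k.succ) := hPc _ (by simp; omega)
        rcases hk with ⟨rfl, rfl⟩ | ⟨rfl, rfl⟩ <;> simp [h1, h2]
      · have hgt : (i : ℕ) < (k : ℕ) := by omega
        have h1 := hnotP k.castSucc (by simp; omega)
        have h2 := hnotP k.succ (by simp; omega)
        rcases hk with ⟨rfl, rfl⟩ | ⟨rfl, rfl⟩ <;> simp [h1, h2]
    intro hr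
    have key : ∀ u v : V,
        (L \ SimpleGraph.fromEdgeSet {s(w i.castSucc, w i.succ)}).Reachable u v →
        (P u ↔ P v) := by
      rintro u v ⟨p⟩
      induction p with
      | nil => exact Iff.rfl
      | cons h p ih => exact (hstep _ _ h).trans ih
    have h1 : P (w i.castSucc) := hPc _ (by simp)
    have h2 : ¬ P (w i.succ) := hnotP i.succ (by simp)
    exact h2 ((key _ _ hr).mp h1)
  -- every cycle of L lies in A or in B
  have hcycAB : ∀ (a : V) (c : L.Walk a a), c.IsCycle →
      (∀ x ∈ c.support, x ∈ A) ∨ (∀ x ∈ c.support, x ∈ B) := by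
    intro a c hc
    have hnoe : ∀ i : Fin d, s(w i.castSucc, w i.succ) ∉ c.edges := fun i =>
      (hbridge i).notMem_edges_of_isCycle hc
    have hedgeAB : ∀ x y : V, s(x, y) ∈ c.edges →
        (x ∈ A ∧ y ∈ A) ∨ (x ∈ B ∧ y ∈ B) := by
      intro x y hxy
      by_contra hcon
      rw [not_or] at hcon
      obtain ⟨k, hk⟩ := (hedges x y hcon.1 hcon.2).mp (c.adj_of_mem_edges hxy)
      rcases hk with ⟨rfl, rfl⟩ | ⟨rfl, rfl⟩
      · exact hnoe k hxy
      · exact hnoe k (by rwa [Sym2.eq_swap] at hxy)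
    have hprop : ∀ {u v : V} (p : L.Walk u v),
        (∀ x y : V, s(x, y) ∈ p.edges → (x ∈ A ∧ y ∈ A) ∨ (x ∈ B ∧ y ∈ B)) →
        (u ∈ A → ∀ x ∈ p.support, x ∈ A) ∧ (u ∈ B → ∀ x ∈ p.support, x ∈ B) := by
      intro u v p
      induction p with
      | nil =>
        intro _
        constructor <;> (intro hu x hx; simp only [SimpleGraph.Walk.support_nil,
          List.mem_singleton] at hx; subst hx; exact hu)
      | @cons u b v h q ih =>
        intro he
        have hfirst := he u b (by simp)
        have hq := ih (fun x y hxy => he x y (by simp [hxy]))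
        constructor
        · intro hu x hx
          rw [SimpleGraph.Walk.support_cons, List.mem_cons] at hx
          rcases hx with rfl | hx
          · exact hu
          · rcases hfirst with ⟨-, h2⟩ | ⟨h1, -⟩
            · exact hq.1 h2 x hx
            · exact (hdAB u hu h1).elim
        · intro hu x hx
          rw [SimpleGraph.Walk.support_cons, List.mem_cons] at hx
          rcases hx with rfl | hx
          · exact hu
          · rcases hfirst with ⟨h1, -⟩ | ⟨-, h2⟩
            · exact (hdAB u h1 hu).elim
            · exact hq.2 h2 x hx
    rcases hcover a with ha | ha | ⟨j, rfl⟩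
    · exact Or.inl ((hprop c hedgeAB).1 ha)
    · exact Or.inr ((hprop c hedgeAB).2 ha)
    · rcases eq_or_ne j 0 with rfl | hj0
      · exact Or.inl ((hprop c hedgeAB).1 hw0)
      rcases eq_or_ne j (Fin.last d) with rfl | hjl
      · exact Or.inr ((hprop c hedgeAB).2 hwd)
      exfalso
      have h1 : 0 < (j : ℕ) := Nat.pos_of_ne_zero (fun h => hj0 (Fin.ext (by simp [h])))
      have h2 : (j : ℕ) < d := by
        have hle : (j : ℕ) ≤ d := Nat.lt_succ_iff.mp j.isLt
        have : (j : ℕ) ≠ d := fun h => hjl (Fin.ext (by simp [h]))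
        omega
      cases c with
      | nil => exact hc.ne_nil rfl
      | @cons _ b _ h q =>
        have := hedgeAB (w j) b (by simp)
        rcases this with ⟨hA1, -⟩ | ⟨hB1, -⟩
        · exact (hint j h1 h2).1 hA1
        · exact (hint j h1 h2).2 hB1
  -- splitting forests
  have hsplit : ∀ X : Finset V,
      IsInducedForest L X ↔ IsInducedForest L (X ∩ A) ∧ IsInducedForest L (X ∩ B) := by
    intro X
    constructor
    · intro h
      exact ⟨aux_forest_mono Finset.inter_subset_left h,
        aux_forest_mono Finset.inter_subset_left h⟩
    · rintro ⟨hFA, hFB⟩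
      intro v c hc
      have hc' : (c.map (SimpleGraph.Embedding.induce ((X : Set V))).toHom).IsCycle :=
        hc.map (by exact Subtype.val_injective)
      have hsup : ∀ x ∈ (c.map (SimpleGraph.Embedding.induce ((X : Set V))).toHom).support,
          x ∈ X := by
        intro x hx
        rw [SimpleGraph.Walk.support_map, List.mem_map] at hx
        obtain ⟨y, -, rfl⟩ := hx
        exact y.2
      rcases hcycAB _ _ hc' with hsA' | hsB'
      · exact aux_no_cycle_of_acyclic_induce hFA _ hc' (fun x hx => by
          simp only [Finset.coe_inter, Set.mem_inter_iff, Finset.mem_coe]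
          exact ⟨hsup x hx, hsA' x hx⟩)
      · exact aux_no_cycle_of_acyclic_induce hFB _ hc' (fun x hx => by
          simp only [Finset.coe_inter, Set.mem_inter_iff, Finset.mem_coe]
          exact ⟨hsup x hx, hsB' x hx⟩)
  -- transfers between forests of subsets of A (resp. B) and the induced graphs
  have hforestA : ∀ Z : Finset V, Z ⊆ A →
      (IsInducedForest L Z ↔
        IsInducedForest (L.induce (A : Set V)) (Z.subtype (fun v => v ∈ (A : Set V)))) := by
    intro Z hZ
    have h1 := aux_forest_subtype (G := L) (S := (A : Set V))
      (Z.subtype (fun v => v ∈ (A : Set V)))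
    rw [Finset.subtype_map_of_mem (fun x hx => by simpa using hZ hx)] at h1
    exact h1.symm
  have hforestB : ∀ Z : Finset V, Z ⊆ B →
      (IsInducedForest L Z ↔
        IsInducedForest (L.induce (B : Set V)) (Z.subtype (fun v => v ∈ (B : Set V)))) := by
    intro Z hZ
    have h1 := aux_forest_subtype (G := L) (S := (B : Set V))
      (Z.subtype (fun v => v ∈ (B : Set V)))
    rw [Finset.subtype_map_of_mem (fun x hx => by simpa using hZ hx)] at h1
    exact h1.symm
  have hcardsubA : ∀ Z : Finset V, Z ⊆ A →
      (Z.subtype (fun v => v ∈ (A : Set V))).card = Z.card := by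
    intro Z hZ
    rw [← Finset.card_map (Function.Embedding.subtype _),
      Finset.subtype_map_of_mem (fun x hx => by simpa using hZ hx)]
  have hcardsubB : ∀ Z : Finset V, Z ⊆ B →
      (Z.subtype (fun v => v ∈ (B : Set V))).card = Z.card := by
    intro Z hZ
    rw [← Finset.card_map (Function.Embedding.subtype _),
      Finset.subtype_map_of_mem (fun x hx => by simpa using hZ hx)]
  -- the interior vertices
  set I : Finset V := (Finset.univ.filter
      (fun j : Fin (d + 1) => 0 < (j : ℕ) ∧ (j : ℕ) < d)).image w with hI
  have hImem : ∀ v : V, v ∈ I ↔ ∃ j : Fin (d + 1),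
      (0 < (j : ℕ) ∧ (j : ℕ) < d) ∧ w j = v := by
    intro v
    simp [hI, Finset.mem_image, Finset.mem_filter]
  have hIcard : I.card = d - 1 := by
    rw [hI, Finset.card_image_of_injective _ hw]
    have himg : (Finset.univ.filter
        (fun j : Fin (d + 1) => 0 < (j : ℕ) ∧ (j : ℕ) < d)).image Fin.val
        = Finset.Ioo 0 d := by
      ext n
      simp only [Finset.mem_image, Finset.mem_filter, Finset.mem_univ, true_and,
        Finset.mem_Ioo]
      constructor
      · rintro ⟨j, ⟨h1, h2⟩, rfl⟩; exact ⟨h1, h2⟩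
      · rintro ⟨h1, h2⟩; exact ⟨⟨n, by omega⟩, ⟨h1, h2⟩, rfl⟩
    have hcc := congrArg Finset.card himg
    rw [Finset.card_image_of_injective _ Fin.val_injective, Nat.card_Ioo] at hcc
    omega
  have hInotAB : ∀ v ∈ I, v ∉ A ∧ v ∉ B := by
    intro v hv
    obtain ⟨j, ⟨h1, h2⟩, rfl⟩ := (hImem v).mp hv
    exact hint j h1 h2
  have hjcase : ∀ j : Fin (d + 1), w j ∈ A ∨ w j ∈ B ∨ w j ∈ I := by
    intro j
    rcases Nat.eq_zero_or_pos (j : ℕ) with h0 | h0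
    · left
      have hj : j = 0 := Fin.ext (by simpa using h0)
      rw [hj]; exact hw0
    rcases Nat.lt_or_ge (j : ℕ) d with h1 | h1
    · right; right; exact (hImem _).mpr ⟨j, ⟨h0, h1⟩, rfl⟩
    · right; left
      have hj : j = Fin.last d := Fin.ext (by
        simp only [Fin.val_last]
        have := Nat.lt_succ_iff.mp j.isLt
        omega)
      rw [hj]; exact hwd
  have hcovX : ∀ X : Finset V, X ⊆ (X ∩ A) ∪ ((X ∩ B) ∪ I) := by
    intro X v hv
    rcases hcover v with h | h | ⟨j, rfl⟩
    · exact Finset.mem_union_left _ (Finset.mem_inter.mpr ⟨hv, h⟩)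
    · exact Finset.mem_union_right _ (Finset.mem_union_left _ (Finset.mem_inter.mpr ⟨hv, h⟩))
    · rcases hjcase j with h | h | h
      · exact Finset.mem_union_left _ (Finset.mem_inter.mpr ⟨hv, h⟩)
      · exact Finset.mem_union_right _ (Finset.mem_union_left _ (Finset.mem_inter.mpr ⟨hv, h⟩))
      · exact Finset.mem_union_right _ (Finset.mem_union_right _ h)
  -- upper bound for any forest of L
  have hub : ∀ X : Finset V, IsInducedForest L X →
      X.card ≤ forestNum (L.induce (A : Set V)) + forestNum (L.induce (B : Set V))
        + (d - 1) := by
    intro X hXf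
    have hcA : (X ∩ A).card ≤ forestNum (L.induce (A : Set V)) := by
      have hfor : IsInducedForest L (X ∩ A) :=
        aux_forest_mono Finset.inter_subset_left hXf
      have hle := (aux_forestNum_spec (L.induce (A : Set V))).2 _
        ((hforestA _ Finset.inter_subset_right).mp hfor)
      rwa [hcardsubA _ Finset.inter_subset_right] at hle
    have hcB : (X ∩ B).card ≤ forestNum (L.induce (B : Set V)) := by
      have hfor : IsInducedForest L (X ∩ B) :=
        aux_forest_mono Finset.inter_subset_left hXf
      have hle := (aux_forestNum_spec (L.induce (B : Set V))).2 _
        ((hforestB _ Finset.inter_subset_right).mp hfor)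
      rwa [hcardsubB _ Finset.inter_subset_right] at hle
    calc X.card ≤ ((X ∩ A) ∪ ((X ∩ B) ∪ I)).card := Finset.card_le_card (hcovX X)
      _ ≤ (X ∩ A).card + ((X ∩ B) ∪ I).card := Finset.card_union_le _ _
      _ ≤ (X ∩ A).card + ((X ∩ B).card + I.card) :=
          Nat.add_le_add_left (Finset.card_union_le _ _) _
      _ ≤ _ := by rw [hIcard]; omega
  -- every maximal forest of L has the expected cardinality
  have hmaxcard : ∀ X : Finset V, IsMaximalInducedForest L X →
      X.card = forestNum (L.induce (A : Set V)) + forestNum (L.induce (B : Set V))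
        + (d - 1) := by
    intro X hX
    have hIX : I ⊆ X := by
      intro v hv
      obtain ⟨j, ⟨hj1, hj2⟩, rfl⟩ := (hImem v).mp hv
      by_contra hvX
      have hXA : insert (w j) X ∩ A = X ∩ A :=
        Finset.insert_inter_of_notMem (hint j hj1 hj2).1
      have hXB : insert (w j) X ∩ B = X ∩ B :=
        Finset.insert_inter_of_notMem (hint j hj1 hj2).2
      have hf : IsInducedForest L (insert (w j) X) := by
        rw [hsplit, hXA, hXB]
        exact (hsplit X).mp hX.1
      exact hX.2 _ (Finset.ssubset_insert hvX) hf
    have hXAfor := ((hsplit X).mp hX.1).1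
    have hXBfor := ((hsplit X).mp hX.1).2
    have hXAmax : IsMaximalInducedForest (L.induce (A : Set V))
        ((X ∩ A).subtype (fun v => v ∈ (A : Set V))) := by
      refine ⟨(hforestA _ Finset.inter_subset_right).mp hXAfor, ?_⟩
      intro Y' hss hY'f
      set Yv := Y'.map (Function.Embedding.subtype _) with hYv
      have hYvA : Yv ⊆ A := by
        intro z hz
        rw [hYv, Finset.mem_map] at hz
        obtain ⟨a, -, rfl⟩ := hz
        exact a.2
      have hYvf : IsInducedForest L Yv := (aux_forest_subtype Y').mp hY'f
      have hsub2 : X ∩ A ⊆ Yv := by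
        intro z hz
        have hzA : z ∈ A := (Finset.mem_inter.mp hz).2
        have hz' : (⟨z, by simpa using hzA⟩ : ↥(A : Set V)) ∈ Y' :=
          hss.subset (Finset.mem_subtype.mpr hz)
        exact Finset.mem_map.mpr ⟨_, hz', rfl⟩
      obtain ⟨a, haY, haX⟩ := Finset.exists_of_ssubset hss
      have haYv : (a : V) ∈ Yv := Finset.mem_map.mpr ⟨a, haY, rfl⟩
      have haXn : (a : V) ∉ X := by
        intro h
        exact haX (Finset.mem_subtype.mpr (Finset.mem_inter.mpr ⟨h, by exact a.2⟩))
      have hforest2 : IsInducedForest L (X ∪ Yv) := by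
        rw [hsplit]
        constructor
        · have hXYA : (X ∪ Yv) ∩ A = Yv := by
            rw [Finset.union_inter_distrib_right, Finset.inter_eq_left.mpr hYvA]
            exact Finset.union_eq_right.mpr hsub2
          rw [hXYA]; exact hYvf
        · have hXYB : (X ∪ Yv) ∩ B = X ∩ B := by
            rw [Finset.union_inter_distrib_right]
            have hYvB : Yv ∩ B = ∅ := by
              rw [Finset.eq_empty_iff_forall_notMem]
              intro z hz
              rw [Finset.mem_inter] at hz
              exact hdAB z (hYvA hz.1) hz.2
            rw [hYvB, Finset.union_empty]
          rw [hXYB]; exact hXBfor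
      refine hX.2 (X ∪ Yv) ?_ hforest2
      rw [Finset.ssubset_iff_of_subset Finset.subset_union_left]
      exact ⟨a, Finset.mem_union_right _ haYv, haXn⟩
    have hXBmax : IsMaximalInducedForest (L.induce (B : Set V))
        ((X ∩ B).subtype (fun v => v ∈ (B : Set V))) := by
      refine ⟨(hforestB _ Finset.inter_subset_right).mp hXBfor, ?_⟩
      intro Y' hss hY'f
      set Yv := Y'.map (Function.Embedding.subtype _) with hYv
      have hYvB : Yv ⊆ B := by
        intro z hz
        rw [hYv, Finset.mem_map] at hz
        obtain ⟨a, -, rfl⟩ := hz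
        exact a.2
      have hYvf : IsInducedForest L Yv := (aux_forest_subtype Y').mp hY'f
      have hsub2 : X ∩ B ⊆ Yv := by
        intro z hz
        have hzB : z ∈ B := (Finset.mem_inter.mp hz).2
        have hz' : (⟨z, by simpa using hzB⟩ : ↥(B : Set V)) ∈ Y' :=
          hss.subset (Finset.mem_subtype.mpr hz)
        exact Finset.mem_map.mpr ⟨_, hz', rfl⟩
      obtain ⟨a, haY, haX⟩ := Finset.exists_of_ssubset hss
      have haYv : (a : V) ∈ Yv := Finset.mem_map.mpr ⟨a, haY, rfl⟩
      have haXn : (a : V) ∉ X := by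
        intro h
        exact haX (Finset.mem_subtype.mpr (Finset.mem_inter.mpr ⟨h, by exact a.2⟩))
      have hforest2 : IsInducedForest L (X ∪ Yv) := by
        rw [hsplit]
        constructor
        · have hXYA : (X ∪ Yv) ∩ A = X ∩ A := by
            rw [Finset.union_inter_distrib_right]
            have hYvA : Yv ∩ A = ∅ := by
              rw [Finset.eq_empty_iff_forall_notMem]
              intro z hz
              rw [Finset.mem_inter] at hz
              exact hdAB z hz.2 (hYvB hz.1)
            rw [hYvA, Finset.union_empty]
          rw [hXYA]; exact hXAfor
        · have hXYB : (X ∪ Yv) ∩ B = Yv := by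
            rw [Finset.union_inter_distrib_right, Finset.inter_eq_left.mpr hYvB]
            exact Finset.union_eq_right.mpr hsub2
          rw [hXYB]; exact hYvf
      refine hX.2 (X ∪ Yv) ?_ hforest2
      rw [Finset.ssubset_iff_of_subset Finset.subset_union_left]
      exact ⟨a, Finset.mem_union_right _ haYv, haXn⟩
    have hcA : (X ∩ A).card = forestNum (L.induce (A : Set V)) := by
      have hcc := aux_wellf_card hwA hXAmax
      rwa [hcardsubA _ Finset.inter_subset_right] at hcc
    have hcB : (X ∩ B).card = forestNum (L.induce (B : Set V)) := by
      have hcc := aux_wellf_card hwB hXBmax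
      rwa [hcardsubB _ Finset.inter_subset_right] at hcc
    have hXeq : X = (X ∩ A) ∪ ((X ∩ B) ∪ I) :=
      Finset.Subset.antisymm (hcovX X)
        (Finset.union_subset Finset.inter_subset_left
          (Finset.union_subset Finset.inter_subset_left hIX))
    have hd2 : Disjoint (X ∩ B) I := by
      rw [Finset.disjoint_left]
      intro v hv hvI
      exact (hInotAB v hvI).2 (Finset.mem_inter.mp hv).2
    have hd1 : Disjoint (X ∩ A) ((X ∩ B) ∪ I) := by
      rw [Finset.disjoint_left]
      intro v hv hv2
      have hvA := (Finset.mem_inter.mp hv).2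
      rcases Finset.mem_union.mp hv2 with h | h
      · exact hdAB v hvA (Finset.mem_inter.mp h).2
      · exact (hInotAB v h).1 hvA
    rw [hXeq, Finset.card_union_of_disjoint hd1, Finset.card_union_of_disjoint hd2,
      hcA, hcB, hIcard]
    omega
  obtain ⟨Xm, -, hXm⟩ := aux_exists_maximal L ∅ (aux_forest_empty L)
  have hfn : forestNum L = forestNum (L.induce (A : Set V))
      + forestNum (L.induce (B : Set V)) + (d - 1) := by
    unfold forestNum
    apply le_antisymm
    · refine csSup_le ⟨0, ∅, aux_forest_empty L, Finset.card_empty⟩ ?_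
      rintro n ⟨X, hX, rfl⟩
      exact hub X hX
    · apply le_csSup
      · refine ⟨Fintype.card V, ?_⟩
        rintro n ⟨X, -, rfl⟩
        exact (Finset.card_le_univ X).trans (by simp)
      · exact ⟨Xm, hXm.1, hmaxcard Xm hXm⟩
  constructor
  · intro X Y hX hY
    rw [hmaxcard X hX, hmaxcard Y hY]
  · rw [hfn]; omega
end

section
/- Let L be a finite simple graph, and let A and B be subsets of its vertex set with A ∪ B equal to the whole vertex set, such that: no edge of L joins a vertex of A \ B to a vertex of B \ A; the induced subgraph L[B] is a forest (acyclic); A ∩ B = {u_1, ..., u_n} where u_1, u_2, ..., u_n are the vertices (in order) of a path of length n - 1 ≥ 1 in L[A], and the edges of L[B] between vertices of A ∩ B are exactly the edges {u_i, u_{i+1}} of this path. Then L is well-f-covered if and only if L[A] is well-f-covered, and in either case f(L) = f(L[A]) + |B| - n. -/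
namespace Stmt10Aux
open SimpleGraph



variable {W : Type*} {G : SimpleGraph W}

/-- No cycle of `G` has all of its support inside `s`. -/
def NoCyc (G : SimpleGraph W) (s : Set W) : Prop :=
  ∀ ⦃v : W⦄ (c : G.Walk v v), c.IsCycle → ∃ z ∈ c.support, z ∉ s

lemma noCyc_mono {s t : Set W} (h : s ⊆ t) (ht : NoCyc G t) : NoCyc G s := by
  intro v c hc
  obtain ⟨z, hz, hzt⟩ := ht c hc
  exact ⟨z, hz, fun hzs => hzt (h hzs)⟩

lemma exists_lift {s : Set W} {x y : W} (c : G.Walk x y) :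
    ∀ (hx : x ∈ s) (hy : y ∈ s), (∀ z ∈ c.support, z ∈ s) →
    ∃ c' : (G.induce s).Walk ⟨x, hx⟩ ⟨y, hy⟩,
      c'.map (SimpleGraph.Embedding.induce s).toHom = c := by
  induction c with
  | nil => exact fun hx hy _ => ⟨Walk.nil, rfl⟩
  | @cons a b d hab p ih =>
    intro hx hy hs
    have hb : b ∈ s := hs b (by simp)
    obtain ⟨c', hc'⟩ := ih hb hy (fun z hz => hs z (by simp [hz]))
    exact ⟨Walk.cons (by exact hab) c', by subst hc'; rfl⟩

lemma emb_inj {s : Set W} :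
    Function.Injective ⇑(SimpleGraph.Embedding.induce (G := G) s).toHom :=
  fun a b h => Subtype.val_injective h

lemma noCyc_iff {s : Set W} : (G.induce s).IsAcyclic ↔ NoCyc G s := by
  constructor
  · intro h v c hc
    by_contra hcon
    push_neg at hcon
    obtain ⟨c', hc'⟩ := exists_lift c (hcon v c.start_mem_support)
      (hcon v c.end_mem_support) hcon
    have : c'.IsCycle := by
      rw [← Walk.map_isCycle_iff_of_injective (p := c') (emb_inj), hc']
      exact hc
    exact h _ this
  · intro h v c hc
    obtain ⟨z, hz, hzs⟩ := h (c.map (Embedding.induce s).toHom) (hc.map emb_inj)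
    rw [Walk.support_map] at hz
    obtain ⟨z', _, rfl⟩ := List.mem_map.mp hz
    exact hzs z'.2

lemma noCyc_induce {s : Set W} {t : Set ↥s} :
    NoCyc (G.induce s) t ↔ NoCyc G (Subtype.val '' t) := by
  constructor
  · intro h v c hc
    by_contra hcon
    push_neg at hcon
    have hsub : ∀ z ∈ c.support, z ∈ s := by
      intro z hz
      obtain ⟨z', _, rfl⟩ := hcon z hz
      exact z'.2
    obtain ⟨c', hc'⟩ := exists_lift c (hsub v c.start_mem_support)
      (hsub v c.end_mem_support) hsub
    have hcyc : c'.IsCycle := by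
      rw [← Walk.map_isCycle_iff_of_injective (p := c') (emb_inj), hc']
      exact hc
    obtain ⟨z', hz', hz't⟩ := h c' hcyc
    apply hz't
    have : (z' : W) ∈ c.support := by
      have e : List.map _ c'.support = c.support :=
        (Walk.support_map _ c').symm.trans (congrArg Walk.support hc')
      rw [← e]
      exact List.mem_map_of_mem hz'
    obtain ⟨w, hw, hweq⟩ := hcon _ this
    rwa [← Subtype.val_injective hweq]
  · intro h v c hc
    obtain ⟨z, hz, hzs⟩ := h (c.map (Embedding.induce s).toHom) (hc.map emb_inj)
    rw [Walk.support_map] at hz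
    obtain ⟨z', hz', rfl⟩ := List.mem_map.mp hz
    exact ⟨z', hz', fun hmem => hzs ⟨z', hmem, rfl⟩⟩





variable {V : Type*} [DecidableEq V] {L : SimpleGraph V} {A B : Finset V}

/-- From a vertex of `B \ A`, a walk ending outside `B \ A` has an initial
segment staying in `B \ A` until it first hits a vertex of `A ∩ B`. -/
lemma exit_lemma (hadjB : ∀ ⦃x y⦄, x ∈ B → x ∉ A → L.Adj x y → y ∈ B) :
    ∀ {x y : V} (w : L.Walk x y), x ∈ B → x ∉ A → (y ∈ B → y ∈ A) →
    ∃ q, q ∈ A ∧ q ∈ B ∧ ∃ p : L.Walk x q, p.support <+: w.support ∧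
      ∀ z ∈ p.support, z = q ∨ (z ∈ B ∧ z ∉ A) := by
  intro x y w
  induction w with
  | nil => exact fun hxB hxA hy => absurd (hy hxB) hxA
  | @cons a b d hab p ih =>
    intro hxB hxA hy
    by_cases hb : b ∈ B ∧ b ∉ A
    · obtain ⟨q, hqA, hqB, p', hpre, hprop⟩ := ih hb.1 hb.2 hy
      refine ⟨q, hqA, hqB, Walk.cons hab p', ?_, ?_⟩
      · rw [Walk.support_cons, Walk.support_cons]
        exact List.cons_prefix_cons.mpr ⟨rfl, hpre⟩
      · intro z hz
        rw [Walk.support_cons, List.mem_cons] at hz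
        rcases hz with rfl | hz
        · exact Or.inr ⟨hxB, hxA⟩
        · exact hprop z hz
    · have hbB : b ∈ B := hadjB hxB hxA hab
      have hbA : b ∈ A := by tauto
      refine ⟨b, hbA, hbB, Walk.cons hab Walk.nil, ?_, ?_⟩
      · rw [Walk.support_cons, Walk.support_cons, Walk.support_nil,
          p.support_eq_cons]
        exact List.cons_prefix_cons.mpr ⟨rfl,
          List.cons_prefix_cons.mpr ⟨rfl, List.nil_prefix⟩⟩
      · intro z hz
        rw [Walk.support_cons, Walk.support_nil, List.mem_cons,
          List.mem_singleton] at hz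
        rcases hz with rfl | rfl
        · exact Or.inr ⟨hxB, hxA⟩
        · exact Or.inl rfl

/-- A walk with both endpoints outside `B \ A`, passing through `B \ A`,
contains a contiguous segment from `A ∩ B` to `A ∩ B` staying in `B`,
and meeting `B \ A`. -/
lemma seg_lemma (hadjB : ∀ ⦃x y⦄, x ∈ B → x ∉ A → L.Adj x y → y ∈ B) :
    ∀ {x y : V} (w : L.Walk x y), (x ∈ B → x ∈ A) → (y ∈ B → y ∈ A) →
    ∀ z ∈ w.support, z ∈ B → z ∉ A →
    ∃ a c : V, a ∈ A ∧ a ∈ B ∧ c ∈ A ∧ c ∈ B ∧ ∃ p : L.Walk a c,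
      p.support <:+: w.support ∧ (∀ t ∈ p.support, t ∈ B) ∧
      ∃ t ∈ p.support, t ∈ B ∧ t ∉ A := by
  intro x y w
  induction w with
  | nil =>
    intro hx _ z hz hzB hzA
    rw [Walk.support_nil, List.mem_singleton] at hz
    subst hz
    exact absurd (hx hzB) hzA
  | @cons a' b d hab p ih =>
    intro hx hy z hz hzB hzA
    by_cases hb : b ∈ B ∧ b ∉ A
    · have hxB : a' ∈ B := hadjB hb.1 hb.2 hab.symm
      have hxA : a' ∈ A := hx hxB
      obtain ⟨q, hqA, hqB, p', hpre, hprop⟩ := exit_lemma hadjB p hb.1 hb.2 hy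
      refine ⟨a', q, hxA, hxB, hqA, hqB, Walk.cons hab p', ?_, ?_, ?_⟩
      · apply List.IsPrefix.isInfix
        rw [Walk.support_cons, Walk.support_cons]
        exact List.cons_prefix_cons.mpr ⟨rfl, hpre⟩
      · intro t ht
        rw [Walk.support_cons, List.mem_cons] at ht
        rcases ht with rfl | ht
        · exact hxB
        · rcases hprop t ht with rfl | h
          exacts [hqB, h.1]
      · refine ⟨b, ?_, hb⟩
        rw [Walk.support_cons]
        exact List.mem_cons_of_mem _ p'.start_mem_support
    · have hb' : b ∈ B → b ∈ A := by tauto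
      have hz' : z ∈ p.support := by
        rw [Walk.support_cons, List.mem_cons] at hz
        rcases hz with rfl | hz
        · exact absurd (hx hzB) hzA
        · exact hz
      obtain ⟨a₀, c₀, h1, h2, h3, h4, p', hinf, hsup, hwit⟩ :=
        ih hb' hy z hz' hzB hzA
      exact ⟨a₀, c₀, h1, h2, h3, h4, p',
        by rw [Walk.support_cons]; exact List.infix_cons hinf, hsup, hwit⟩

lemma infix_of_cons {α : Type*} {l t : List α} {a : α}
    (h : l <:+: a :: t) (ha : a ∉ l) : l <:+: t := by
  rcases List.infix_cons_iff.mp h with hpre | hinf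
  · cases l with
    | nil => exact List.nil_infix
    | cons b l' =>
      obtain ⟨rfl, -⟩ := List.cons_prefix_cons.mp hpre
      exact absurd (List.mem_cons_self (a := b) (l := l')) ha
  · exact hinf

lemma walk_along {n : ℕ} (u : Fin n → V)
    (hp' : ∀ i j : Fin n, (i : ℕ) + 1 = (j : ℕ) → L.Adj (u i) (u j)) :
    ∀ (d i j : ℕ) (hi : i < n) (hj : j < n), i + d = j →
    ∃ q : L.Walk (u ⟨i, hi⟩) (u ⟨j, hj⟩), ∀ z ∈ q.support, ∃ k, z = u k := by
  intro d
  induction d with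
  | zero =>
    intro i j hi hj h
    have : i = j := by omega
    subst this
    refine ⟨Walk.nil, ?_⟩
    intro z hz
    rw [Walk.support_nil, List.mem_singleton] at hz
    exact ⟨_, hz⟩
  | succ d ih =>
    intro i j hi hj h
    have hi1 : i + 1 < n := by omega
    have adj : L.Adj (u ⟨i, hi⟩) (u ⟨i + 1, hi1⟩) := hp' _ _ rfl
    obtain ⟨q, hq⟩ := ih (i + 1) j hi1 hj (by omega)
    refine ⟨Walk.cons adj q, ?_⟩
    intro z hz
    rw [Walk.support_cons, List.mem_cons] at hz
    rcases hz with rfl | hz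
    exacts [⟨_, rfl⟩, hq z hz]




variable {W : Type*} {G : SimpleGraph W}

lemma mem_tail_of_closed {v z : W} {c : G.Walk v v} (h : c ≠ Walk.nil)
    (hz : z ∈ c.support) : z ∈ c.support.tail := by
  cases c with
  | nil => exact absurd rfl h
  | cons hadj p =>
    rw [Walk.support_cons] at hz ⊢
    simp only [List.tail_cons]
    rcases List.mem_cons.mp hz with rfl | h'
    · exact p.end_mem_support
    · exact h'

variable {V : Type*} [DecidableEq V]

/-- Every cycle of `L` lies entirely in `A` or entirely in `B`. -/
lemma cycle_loc (L : SimpleGraph V) (A B : Finset V)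
    (hAB : ∀ v : V, v ∈ A ∨ v ∈ B)
    (hadjB : ∀ ⦃x y⦄, x ∈ B → x ∉ A → L.Adj x y → y ∈ B)
    (hBforest : (L.induce (B : Set V)).IsAcyclic)
    (hwalk : ∀ a c : V, a ∈ A → a ∈ B → c ∈ A → c ∈ B →
      ∃ q : L.Walk a c, ∀ z ∈ q.support, z ∈ A ∩ B) :
    ∀ ⦃v : V⦄ (c : L.Walk v v), c.IsCycle →
      (∀ z ∈ c.support, z ∈ A) ∨ (∀ z ∈ c.support, z ∈ B) := by
  intro v c hc
  by_contra hcon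
  push_neg at hcon
  obtain ⟨⟨za, hza, hzaA⟩, ⟨zb, hzb, hzbB⟩⟩ := hcon
  have hzaB : za ∈ B := (hAB za).resolve_left hzaA
  have hzbA : zb ∈ A := (hAB zb).resolve_right hzbB
  set c₂ := c.rotate zb hzb with hc₂def
  have hc₂ : c₂.IsCycle := hc.rotate hzb
  have hza₂ : za ∈ c₂.support := by
    have h1 : za ∈ c.support.tail := mem_tail_of_closed hc.ne_nil hza
    have h2 : za ∈ c₂.support.tail :=
      ((Walk.support_rotate c zb hzb).perm.mem_iff).mpr h1
    rw [c₂.support_eq_cons]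
    exact List.mem_cons_of_mem _ h2
  obtain ⟨a₀, c₀, ha₀A, ha₀B, hc₀A, hc₀B, p, hinf, hsupB, t, htmem, htB, htA⟩ :=
    seg_lemma hadjB c₂ (fun _ => hzbA) (fun _ => hzbA) za hza₂ hzaB hzaA
  -- p is a path: its support is nodup
  have hzbp : zb ∉ p.support := fun hmem => hzbB (hsupB zb hmem)
  have hinf' : p.support <:+: c₂.support.tail := by
    apply infix_of_cons _ hzbp
    rwa [← c₂.support_eq_cons]
  have hnodup : p.support.Nodup :=
    (hinf'.sublist.nodup ((Walk.isCycle_def _).mp hc₂).2.2)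
  have hpPath : p.IsPath := (Walk.isPath_def p).mpr hnodup
  -- lift p to the induced forest on B
  have hsupB' : ∀ z ∈ p.support, z ∈ (B : Set V) := fun z hz => hsupB z hz
  obtain ⟨p₁, hp₁⟩ := exists_lift p (ha₀B) (hc₀B) hsupB'
  have hp₁path : p₁.IsPath := by
    rw [← Walk.map_isPath_iff_of_injective (p := p₁) emb_inj, hp₁]
    exact hpPath
  -- the walk along the path of `u`s
  obtain ⟨q, hq⟩ := hwalk a₀ c₀ ha₀A ha₀B hc₀A hc₀B
  have hqB : ∀ z ∈ q.support, z ∈ (B : Set V) := fun z hz =>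
    Finset.mem_coe.mpr (Finset.mem_inter.mp (hq z hz)).2
  obtain ⟨q₁, hq₁⟩ := exists_lift q (ha₀B) (hc₀B) hqB
  -- uniqueness of paths in the forest on B
  have huniq := SimpleGraph.isAcyclic_iff_path_unique.mp hBforest
    ⟨p₁, hp₁path⟩ q₁.toPath
  have hsupp_eq : p₁.support = (q₁.bypass).support := by
    have h := congrArg Subtype.val huniq
    exact congrArg Walk.support h
  -- t ∈ p.support gives t in q.support, hence t ∈ A; contradiction
  obtain ⟨t₁, ht₁, rfl⟩ : ∃ t₁ ∈ p₁.support, (t₁ : V) = t := by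
    have htmem' := htmem
    have e : List.map _ p₁.support = p.support :=
      (Walk.support_map _ p₁).symm.trans (congrArg Walk.support hp₁)
    rw [← e] at htmem'
    obtain ⟨t₁, ht₁, h⟩ := List.mem_map.mp htmem'
    exact ⟨t₁, ht₁, h⟩
  have ht₁q : (t₁ : V) ∈ q.support := by
    have h1 : t₁ ∈ q₁.bypass.support := hsupp_eq ▸ ht₁
    have h2 : t₁ ∈ q₁.support := q₁.support_bypass_subset h1
    have e : List.map _ q₁.support = q.support :=
      (Walk.support_map _ q₁).symm.trans (congrArg Walk.support hq₁)
    rw [← e]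
    exact List.mem_map_of_mem h2
  exact htA (Finset.mem_inter.mp (hq _ ht₁q)).1




variable {V : Type*} {A : Set V}

/-- Push a finset of the subtype `↥A` down to a finset of `V`. -/
def embA (A : Set V) (F : Finset ↥A) : Finset V :=
  F.map (Function.Embedding.subtype _)

lemma embA_coe (F : Finset ↥A) :
    (↑(embA A F) : Set V) = Subtype.val '' (↑F : Set ↥A) := by
  simp [embA, Finset.coe_map]

lemma embA_mem {F : Finset ↥A} {x : V} : x ∈ embA A F ↔ ∃ y ∈ F, (y : V) = x := by
  simp [embA]

lemma embA_subsetA (F : Finset ↥A) : ∀ x ∈ embA A F, x ∈ A := by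
  intro x hx
  obtain ⟨y, -, rfl⟩ := embA_mem.mp hx
  exact y.2

lemma embA_card (F : Finset ↥A) : (embA A F).card = F.card :=
  Finset.card_map _

lemma embA_subset_iff {F F' : Finset ↥A} : embA A F ⊆ embA A F' ↔ F ⊆ F' :=
  Finset.map_subset_map

lemma embA_injective : Function.Injective (embA A) :=
  Finset.map_injective _

lemma embA_surj (Y : Finset V) (hY : ∀ x ∈ Y, x ∈ A) : ∃ F, embA A F = Y := by
  classical
  exact ⟨Y.subtype _, Finset.subtype_map_of_mem hY⟩



end Stmt10Aux

open Stmt10Aux in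
/-- `A ∪ B` is the whole vertex set of `L`, no edge of `L` joins
`A \ B` to `B \ A`, the induced subgraph `L[B]` is a forest, `A ∩ B` consists of the
`n` distinct vertices `u 0, ..., u (n-1)` (with `n - 1 ≥ 1`), and the edges of `L`
among these vertices are exactly the consecutive path edges `{u i, u (i+1)}` (a path
lying in `L[A]` and in `L[B]`). Then `L` is well-f-covered iff `L[A]` is, and in
either case `f(L) = f(L[A]) + |B| - n`. -/
theorem stmt10 {V : Type*} [Fintype V] [DecidableEq V] (L : SimpleGraph V)
    (A B : Finset V) (hcover : A ∪ B = Finset.univ)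
    (hnoedge : ∀ a ∈ A, a ∉ B → ∀ b ∈ B, b ∉ A → ¬ L.Adj a b)
    (hBforest : (L.induce (B : Set V)).IsAcyclic)
    (n : ℕ) (hn : 2 ≤ n) (u : Fin n → V) (hu : Function.Injective u)
    (hinter : A ∩ B = Finset.image u Finset.univ)
    (hpath : ∀ i j : Fin n, L.Adj (u i) (u j) ↔ ((i : ℕ) + 1 = (j : ℕ) ∨ (j : ℕ) + 1 = (i : ℕ))) :
    (WellFCovered L ↔ WellFCovered (L.induce (A : Set V))) ∧
      forestNum L = forestNum (L.induce (A : Set V)) + B.card - n := by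
  classical
  have hAB : ∀ v : V, v ∈ A ∨ v ∈ B := by
    intro v
    have h := Finset.mem_univ v
    rw [← hcover, Finset.mem_union] at h
    exact h
  have hadjB : ∀ ⦃x y : V⦄, x ∈ B → x ∉ A → L.Adj x y → y ∈ B := by
    intro x y hxB hxA hadj
    by_contra hyB
    exact hnoedge y ((hAB y).resolve_right hyB) hyB x hxB hxA hadj.symm
  have hmemP : ∀ k : Fin n, u k ∈ A ∩ B := by
    intro k; rw [hinter]; exact Finset.mem_image_of_mem u (Finset.mem_univ k)
  have hwalk : ∀ a c : V, a ∈ A → a ∈ B → c ∈ A → c ∈ B →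
      ∃ q : L.Walk a c, ∀ z ∈ q.support, z ∈ A ∩ B := by
    intro a c haA haB hcA hcB
    have ha : a ∈ A ∩ B := Finset.mem_inter.mpr ⟨haA, haB⟩
    have hc : c ∈ A ∩ B := Finset.mem_inter.mpr ⟨hcA, hcB⟩
    rw [hinter, Finset.mem_image] at ha hc
    obtain ⟨i, -, rfl⟩ := ha
    obtain ⟨j, -, rfl⟩ := hc
    have hp' : ∀ i j : Fin n, (i : ℕ) + 1 = (j : ℕ) → L.Adj (u i) (u j) :=
      fun i j h => (hpath i j).mpr (Or.inl h)
    have key : ∀ z : V, (∃ k, z = u k) → z ∈ A ∩ B := by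
      rintro z ⟨k, rfl⟩; exact hmemP k
    rcases le_or_gt (i : ℕ) (j : ℕ) with h | h
    · obtain ⟨q, hq⟩ := walk_along u hp' ((j : ℕ) - (i : ℕ)) i j i.isLt j.isLt (by omega)
      exact ⟨q, fun z hz => key z (hq z hz)⟩
    · obtain ⟨q, hq⟩ := walk_along u hp' ((i : ℕ) - (j : ℕ)) j i j.isLt i.isLt (by omega)
      refine ⟨q.reverse, fun z hz => key z (hq z ?_)⟩
      rwa [SimpleGraph.Walk.support_reverse, List.mem_reverse] at hz
  have cycLoc := cycle_loc L A B hAB hadjB hBforest hwalk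
  have hBNC : NoCyc L ↑B := noCyc_iff.mp hBforest
  have KEY : ∀ s : Finset V, s ⊆ A → NoCyc L ↑s → NoCyc L ↑(s ∪ (B \ A)) := by
    intro s hsA hs v c hc
    rcases cycLoc c hc with hA | hB
    · obtain ⟨z, hz, hzs⟩ := hs c hc
      refine ⟨z, hz, ?_⟩
      rw [Finset.coe_union, Set.mem_union]
      rintro (h | h)
      · exact hzs h
      · rw [Finset.mem_coe, Finset.mem_sdiff] at h
        exact h.2 (hA z hz)
    · obtain ⟨z, hz, hzB⟩ := hBNC c hc
      exact absurd (Finset.mem_coe.mpr (hB z hz)) hzB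
  have forest_iff : ∀ X : Finset V, IsInducedForest L X ↔ NoCyc L ↑X :=
    fun X => noCyc_iff
  have forestA_iff : ∀ F : Finset ↥(A : Set V),
      IsInducedForest (L.induce (A : Set V)) F ↔ NoCyc L ↑(embA (A : Set V) F) := by
    intro F
    have h1 : IsInducedForest (L.induce (A : Set V)) F ↔
        NoCyc (L.induce (A : Set V)) ↑F := noCyc_iff
    have h2 := noCyc_induce (G := L) (s := (A : Set V)) (t := ↑F)
    exact h1.trans (h2.trans (by rw [embA_coe]))
  have heA : ∀ F : Finset ↥(A : Set V), embA (A : Set V) F ⊆ A := by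
    intro F x hx
    exact Finset.mem_coe.mp (embA_subsetA F x hx)
  have hXsub : ∀ X : Finset V, X ⊆ (X ∩ A) ∪ (B \ A) := by
    intro X x hx
    by_cases hA : x ∈ A
    · exact Finset.mem_union_left _ (Finset.mem_inter.mpr ⟨hx, hA⟩)
    · exact Finset.mem_union_right _
        (Finset.mem_sdiff.mpr ⟨(hAB x).resolve_left hA, hA⟩)
  have hdisj : ∀ s : Finset V, s ⊆ A → Disjoint s (B \ A) := by
    intro s hs
    exact Finset.disjoint_left.mpr
      (fun x hx hx' => (Finset.mem_sdiff.mp hx').2 (hs hx))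
  have hinterA : ∀ s : Finset V, s ⊆ A → (s ∪ (B \ A)) ∩ A = s := by
    intro s hs
    ext x
    rw [Finset.mem_inter, Finset.mem_union, Finset.mem_sdiff]
    constructor
    · rintro ⟨h1 | h2, hA⟩
      · exact h1
      · exact absurd hA h2.2
    · intro hxs
      exact ⟨Or.inl hxs, hs hxs⟩
  -- H1 : maximal forests of L come from maximal forests of L[A]
  have H1 : ∀ X : Finset V, IsMaximalInducedForest L X →
      ∃ F : Finset ↥(A : Set V), X = embA (A : Set V) F ∪ (B \ A) ∧
        IsMaximalInducedForest (L.induce (A : Set V)) F ∧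
        X.card = F.card + (B \ A).card := by
    rintro X ⟨hXf, hXmax⟩
    have hXnc := (forest_iff X).mp hXf
    have hXA : NoCyc L ↑(X ∩ A) :=
      noCyc_mono (Finset.coe_subset.mpr Finset.inter_subset_left) hXnc
    have hXC : NoCyc L ↑((X ∩ A) ∪ (B \ A)) := KEY _ Finset.inter_subset_right hXA
    have hXeq : X = (X ∩ A) ∪ (B \ A) := by
      by_contra hne
      exact hXmax _ (ssubset_of_subset_of_ne (hXsub X) hne) ((forest_iff _).mpr hXC)
    obtain ⟨F, hF⟩ := embA_surj (A := (A : Set V)) (X ∩ A)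
      (fun x hx => Finset.mem_coe.mpr (Finset.mem_inter.mp hx).2)
    refine ⟨F, by rw [hF]; exact hXeq, ⟨?_, ?_⟩, ?_⟩
    · exact (forestA_iff F).mpr (by rw [hF]; exact hXA)
    · intro Y hFY hYf
      have hYnc := (forestA_iff Y).mp hYf
      have hYC : NoCyc L ↑(embA (A : Set V) Y ∪ (B \ A)) := KEY _ (heA Y) hYnc
      apply hXmax (embA (A : Set V) Y ∪ (B \ A)) ?_ ((forest_iff _).mpr hYC)
      have hsub : embA (A : Set V) F ⊆ embA (A : Set V) Y :=
        embA_subset_iff.mpr (ssubset_iff_subset_ne.mp hFY).1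
      have hne : embA (A : Set V) F ≠ embA (A : Set V) Y :=
        fun h => (ssubset_iff_subset_ne.mp hFY).2 (embA_injective h)
      rw [hXeq, ← hF]
      refine ssubset_iff_subset_ne.mpr ⟨Finset.union_subset_union_left hsub, ?_⟩
      intro hcontra
      apply hne
      calc embA (A : Set V) F = (embA (A : Set V) F ∪ (B \ A)) ∩ A :=
            (hinterA _ (heA F)).symm
        _ = (embA (A : Set V) Y ∪ (B \ A)) ∩ A := by rw [hcontra]
        _ = embA (A : Set V) Y := hinterA _ (heA Y)
    · rw [hXeq, ← hF, Finset.card_union_of_disjoint (hdisj _ (heA F)), embA_card]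
  -- H2 : maximal forests of L[A] give maximal forests of L
  have H2 : ∀ F : Finset ↥(A : Set V), IsMaximalInducedForest (L.induce (A : Set V)) F →
      IsMaximalInducedForest L (embA (A : Set V) F ∪ (B \ A)) := by
    rintro F ⟨hFf, hFmax⟩
    constructor
    · exact (forest_iff _).mpr (KEY _ (heA F) ((forestA_iff F).mp hFf))
    · intro Z hZss hZf
      have hZnc := (forest_iff Z).mp hZf
      have hZA : NoCyc L ↑(Z ∩ A) :=
        noCyc_mono (Finset.coe_subset.mpr Finset.inter_subset_left) hZnc
      obtain ⟨F', hF'⟩ := embA_surj (A := (A : Set V)) (Z ∩ A)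
        (fun x hx => Finset.mem_coe.mpr (Finset.mem_inter.mp hx).2)
      have hFF' : embA (A : Set V) F ⊆ embA (A : Set V) F' := by
        rw [hF']
        calc embA (A : Set V) F = (embA (A : Set V) F ∪ (B \ A)) ∩ A :=
              (hinterA _ (heA F)).symm
          _ ⊆ Z ∩ A := Finset.inter_subset_inter
              (ssubset_iff_subset_ne.mp hZss).1 (subset_refl A)
      by_cases hEq : embA (A : Set V) F = embA (A : Set V) F'
      · have hZsub : Z ⊆ embA (A : Set V) F ∪ (B \ A) := by
          refine subset_trans (hXsub Z) ?_
          rw [hEq, hF']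
        have := (ssubset_iff_subset_ne.mp hZss).2
        exact this (Finset.Subset.antisymm (ssubset_iff_subset_ne.mp hZss).1 hZsub)
      · have hFltF' : F ⊂ F' := ssubset_iff_subset_ne.mpr
          ⟨embA_subset_iff.mp hFF', fun h => hEq (by rw [h])⟩
        exact hFmax F' hFltF' ((forestA_iff F').mpr (by rw [hF']; exact hZA))
  -- cardinality of a maximal forest built from F
  have hcardF : ∀ F : Finset ↥(A : Set V),
      (embA (A : Set V) F ∪ (B \ A)).card = F.card + (B \ A).card := by
    intro F
    rw [Finset.card_union_of_disjoint (hdisj _ (heA F)), embA_card]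
  constructor
  · constructor
    · intro hL F F' hF hF'
      have h := hL _ _ (H2 F hF) (H2 F' hF')
      rw [hcardF F, hcardF F'] at h
      omega
    · intro hA X Y hX hY
      obtain ⟨F, -, hFmax, hXcard⟩ := H1 X hX
      obtain ⟨F', -, hF'max, hYcard⟩ := H1 Y hY
      rw [hXcard, hYcard, hA F F' hFmax hF'max]
  · -- forest number computation
    have hbddL : BddAbove {m | ∃ X : Finset V, IsInducedForest L X ∧ X.card = m} :=
      ⟨Fintype.card V, by rintro m ⟨X, -, rfl⟩; exact Finset.card_le_univ X⟩
    have hbddA : BddAbove {m | ∃ X : Finset ↥(A : Set V),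
        IsInducedForest (L.induce (A : Set V)) X ∧ X.card = m} :=
      ⟨Fintype.card ↥(A : Set V), by rintro m ⟨X, -, rfl⟩; exact Finset.card_le_univ X⟩
    have hneL : {m | ∃ X : Finset V, IsInducedForest L X ∧ X.card = m}.Nonempty := by
      refine ⟨0, ∅, ?_, Finset.card_empty⟩
      intro v c hc
      simpa using v.2
    have hneA : {m | ∃ X : Finset ↥(A : Set V),
        IsInducedForest (L.induce (A : Set V)) X ∧ X.card = m}.Nonempty := by
      refine ⟨0, ∅, ?_, Finset.card_empty⟩
      intro v c hc
      simpa using v.2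
    have hmemL : ∃ X : Finset V, IsInducedForest L X ∧ X.card = forestNum L :=
      Nat.sSup_mem hneL hbddL
    have hmemA : ∃ F : Finset ↥(A : Set V), IsInducedForest (L.induce (A : Set V)) F ∧
        F.card = forestNum (L.induce (A : Set V)) :=
      Nat.sSup_mem hneA hbddA
    have hLle : forestNum L ≤ forestNum (L.induce (A : Set V)) + (B \ A).card := by
      obtain ⟨X, hXf, hXcard⟩ := hmemL
      rw [← hXcard]
      have h1 : X.card ≤ (X ∩ A).card + (B \ A).card :=
        le_trans (Finset.card_le_card (hXsub X)) (Finset.card_union_le _ _)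
      have hXA : NoCyc L ↑(X ∩ A) :=
        noCyc_mono (Finset.coe_subset.mpr Finset.inter_subset_left)
          ((forest_iff X).mp hXf)
      obtain ⟨F, hF⟩ := embA_surj (A := (A : Set V)) (X ∩ A)
        (fun x hx => Finset.mem_coe.mpr (Finset.mem_inter.mp hx).2)
      have hFforest : IsInducedForest (L.induce (A : Set V)) F :=
        (forestA_iff F).mpr (by rw [hF]; exact hXA)
      have h2 : (X ∩ A).card ≤ forestNum (L.induce (A : Set V)) := by
        have : (X ∩ A).card = F.card := by rw [← hF, embA_card]
        rw [this]
        exact le_csSup hbddA ⟨F, hFforest, rfl⟩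
      omega
    have hLge : forestNum (L.induce (A : Set V)) + (B \ A).card ≤ forestNum L := by
      obtain ⟨F, hFf, hFcard⟩ := hmemA
      have hforest : NoCyc L ↑(embA (A : Set V) F ∪ (B \ A)) :=
        KEY _ (heA F) ((forestA_iff F).mp hFf)
      refine le_csSup hbddL ⟨_, (forest_iff _).mpr hforest, ?_⟩
      rw [hcardF F, hFcard]
    have heq : forestNum L = forestNum (L.induce (A : Set V)) + (B \ A).card :=
      le_antisymm hLle hLge
    have hPcard : (A ∩ B).card = n := by
      rw [hinter, Finset.card_image_of_injective _ hu, Finset.card_univ,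
        Fintype.card_fin]
    have hnB : n ≤ B.card := by
      rw [← hPcard]
      exact Finset.card_le_card Finset.inter_subset_right
    have hCcard : (B \ A).card = B.card - n := by
      have hBA : B \ A = B \ (A ∩ B) := by
        ext x
        rw [Finset.mem_sdiff, Finset.mem_sdiff, Finset.mem_inter]
        tauto
      rw [hBA, Finset.card_sdiff_of_subset Finset.inter_subset_right, hPcard]
    rw [heq, hCcard]
    omega
end
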